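/- arXiv:0707.1838 — 6 statements merged into one kernel-verified Lean document; each statement's English description precedes it below -/
import Mathlib

section
/- Let m, p, q be integers with 0 ≤ q ≤ p and p + q ≤ m, and let X be an m-by-m complex unitary matrix. Then there exist unitary matrices U₁ ∈ U(p), U₂ ∈ U(m−p), V₁ ∈ U(q), V₂ ∈ U(m−q) and angles θ₁, …, θ_q ∈ [0, π/2] such that, with C = diag(cos θ₁, …, cos θ_q) and S = diag(sin θ₁, …, sin θ_q), X = diag(U₁, U₂) · Σ · diag(V₁, V₂)*, where Σ is the m-by-m real matrix whose block structure (rows partitioned as q, p−q, q, m−p−q and columns partitioned as q, q, p−q, m−p−q) is [[C, S, 0, 0], [0, 0, I_{p−q}, 0], [−S, C, 0, 0], [0, 0, 0, I_{m−p−q}]]. -/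
open Matrix

/-- The middle factor Σ of the complete CS decomposition: an `m × m` real matrix
whose rows are partitioned as `q, p-q, q, m-p-q` and columns as `q, q, p-q, m-p-q`,
with block structure `[[C, S, 0, 0], [0, 0, I, 0], [-S, C, 0, 0], [0, 0, 0, I]]`. -/
noncomputable def csdSigma (m p q : ℕ) (θ : Fin q → ℝ) : Matrix (Fin m) (Fin m) ℝ :=
  fun i j =>
    if hi : i.val < q then
      (if j.val = i.val then Real.cos (θ ⟨i.val, hi⟩) else 0) +
      (if j.val = i.val + q then Real.sin (θ ⟨i.val, hi⟩) else 0)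
    else if hi2 : i.val < p then
      if j.val = i.val + q then 1 else 0
    else if hi3 : i.val < p + q then
      (if j.val = i.val - p then -Real.sin (θ ⟨i.val - p, by omega⟩) else 0) +
      (if j.val = i.val - p + q then Real.cos (θ ⟨i.val - p, by omega⟩) else 0)
    else
      if j = i then 1 else 0

/-- The block diagonal matrix `diag(A, B)` of sizes `k` and `m - k`, viewed as an
`m × m` matrix (for `k ≤ m`). -/
def blockDiagC (m k : ℕ) (h : k ≤ m) (A : Matrix (Fin k) (Fin k) ℂ)
    (B : Matrix (Fin (m - k)) (Fin (m - k)) ℂ) : Matrix (Fin m) (Fin m) ℂ :=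
  Matrix.reindex (finSumFinEquiv.trans (finCongr (Nat.add_sub_cancel' h)))
    (finSumFinEquiv.trans (finCongr (Nat.add_sub_cancel' h)))
    (Matrix.fromBlocks A 0 0 B)

-- basic sum lemmas

lemma sum_ind {m : ℕ} {α : Type*} [NonAssocSemiring α] (a b : ℕ) (x y : α) (ha : a < m) :
    ∑ j : Fin m, (if (j : ℕ) = a then x else 0) * (if (j : ℕ) = b then y else 0)
      = if a = b then x * y else 0 := by
  rw [Finset.sum_eq_single (⟨a, ha⟩ : Fin m)]
  · simp only [Fin.val_mk, if_pos rfl]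
    split_ifs <;> simp
  · intro j _ hj
    rw [if_neg, zero_mul]
    exact fun h => hj (Fin.ext h)
  · simp

lemma sum_single_right {m : ℕ} {α : Type*} [NonAssocSemiring α] (f : Fin m → α) (a : ℕ)
    (x : α) (ha : a < m) :
    ∑ k : Fin m, f k * (if (k : ℕ) = a then x else 0) = f ⟨a, ha⟩ * x := by
  rw [Finset.sum_eq_single (⟨a, ha⟩ : Fin m)]
  · simp
  · intro j _ hj
    rw [if_neg, mul_zero]
    exact fun h => hj (Fin.ext h)
  · simp

lemma sum_fin_split {M : Type*} [AddCommMonoid M] (m k : ℕ) (h : k ≤ m) (f : Fin m → M) :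
    ∑ i : Fin m, f i =
      ∑ i : Fin k, f (Fin.castLE h i) + ∑ i : Fin (m - k), f ⟨k + i, by omega⟩ := by
  rw [← Equiv.sum_comp (finSumFinEquiv.trans (finCongr (Nat.add_sub_cancel' h))) f,
    Fintype.sum_sum_type]
  refine congrArg₂ (· + ·) (Finset.sum_congr rfl fun t _ => congrArg f (Fin.ext ?_))
    (Finset.sum_congr rfl fun t _ => congrArg f (Fin.ext ?_)) <;> simp

lemma two_ind_orth {m : ℕ} (a b a' b' : ℕ) (x y x' y' : ℝ) (ha : a < m) (hb : b < m) :
    ∑ j : Fin m, ((if (j : ℕ) = a then x else 0) + (if (j : ℕ) = b then y else 0)) *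
      ((if (j : ℕ) = a' then x' else 0) + (if (j : ℕ) = b' then y' else 0)) =
      (if a = a' then x * x' else 0) + (if a = b' then x * y' else 0) +
      (if b = a' then y * x' else 0) + (if b = b' then y * y' else 0) := by
  simp_rw [add_mul, mul_add, Finset.sum_add_distrib,
    sum_ind a a' x x' ha, sum_ind a b' x y' ha, sum_ind b a' y x' hb, sum_ind b b' y y' hb]
  ring

-- blockDiagC lemmas

lemma blockDiagC_apply (m k : ℕ) (h : k ≤ m) (A : Matrix (Fin k) (Fin k) ℂ)
    (B : Matrix (Fin (m - k)) (Fin (m - k)) ℂ) (i j : Fin m) :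
    blockDiagC m k h A B i j =
      if hi : (i : ℕ) < k then
        (if hj : (j : ℕ) < k then A ⟨i, hi⟩ ⟨j, hj⟩ else 0)
      else
        (if hj : (j : ℕ) < k then 0 else
          B ⟨(i : ℕ) - k, by omega⟩ ⟨(j : ℕ) - k, by omega⟩) := by
  unfold blockDiagC
  set e := finSumFinEquiv.trans (finCongr (Nat.add_sub_cancel' h)) with he
  have key : ∀ x : Fin m, e.symm x = if hx : (x : ℕ) < k then Sum.inl ⟨x, hx⟩
      else Sum.inr ⟨(x : ℕ) - k, by omega⟩ := by
    intro x
    rw [Equiv.symm_apply_eq]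
    split_ifs with hx
    · apply Fin.ext; simp [he]
    · apply Fin.ext; simp [he]; omega
  rw [Matrix.reindex_apply, Matrix.submatrix_apply, key, key]
  split_ifs with h1 h2 h2 <;> simp [Matrix.fromBlocks]

lemma blockDiagC_mul (m k : ℕ) (h : k ≤ m) (A C : Matrix (Fin k) (Fin k) ℂ)
    (B D : Matrix (Fin (m - k)) (Fin (m - k)) ℂ) :
    blockDiagC m k h A B * blockDiagC m k h C D = blockDiagC m k h (A * C) (B * D) := by
  simp only [blockDiagC, Matrix.reindex_apply, Matrix.submatrix_mul_equiv,
    Matrix.fromBlocks_multiply]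
  simp

lemma blockDiagC_conjTranspose (m k : ℕ) (h : k ≤ m) (A : Matrix (Fin k) (Fin k) ℂ)
    (B : Matrix (Fin (m - k)) (Fin (m - k)) ℂ) :
    (blockDiagC m k h A B)ᴴ = blockDiagC m k h Aᴴ Bᴴ := by
  simp only [blockDiagC, Matrix.reindex_apply, Matrix.conjTranspose_submatrix,
    Matrix.fromBlocks_conjTranspose]
  simp

lemma blockDiagC_one (m k : ℕ) (h : k ≤ m) :
    blockDiagC m k h 1 1 = 1 := by
  simp only [blockDiagC, Matrix.fromBlocks_one, Matrix.reindex_apply, Matrix.submatrix_one_equiv]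

lemma blockDiagC_mem (m k : ℕ) (h : k ≤ m) (A : Matrix (Fin k) (Fin k) ℂ)
    (B : Matrix (Fin (m - k)) (Fin (m - k)) ℂ) (hA : A ∈ Matrix.unitaryGroup (Fin k) ℂ)
    (hB : B ∈ Matrix.unitaryGroup (Fin (m - k)) ℂ) :
    blockDiagC m k h A B ∈ Matrix.unitaryGroup (Fin m) ℂ := by
  rw [Matrix.mem_unitaryGroup_iff'] at hA hB ⊢
  rw [Matrix.star_eq_conjTranspose] at hA hB ⊢
  rw [blockDiagC_conjTranspose, blockDiagC_mul, hA, hB, blockDiagC_one]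

-- orthogonality of csdSigma (proved above in t4)

lemma csdSigma_mul_transpose (m p q : ℕ) (hqp : q ≤ p) (hpqm : p + q ≤ m) (θ : Fin q → ℝ) :
    csdSigma m p q θ * (csdSigma m p q θ)ᵀ = 1 := by
  classical
  set co : ℕ → ℝ := fun t => if ht : t < q then Real.cos (θ ⟨t, ht⟩) else 1 with hco
  set si : ℕ → ℝ := fun t => if ht : t < q then Real.sin (θ ⟨t, ht⟩) else 0 with hsi
  have hpy : ∀ t, co t * co t + si t * si t = 1 := by
    intro t
    simp only [hco, hsi]
    split_ifs with h
    · have := Real.sin_sq_add_cos_sq (θ ⟨t, h⟩); nlinarith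
    · norm_num
  have hrow : ∀ i : Fin m, ∃ a b x y, a < m ∧ b < m ∧
      (∀ j : Fin m, csdSigma m p q θ i j =
        (if (j : ℕ) = a then x else 0) + (if (j : ℕ) = b then y else 0)) ∧
      ((i : ℕ) < q ∧ a = (i : ℕ) ∧ b = (i : ℕ) + q ∧ x = co i ∧ y = si i ∨
       q ≤ (i : ℕ) ∧ (i : ℕ) < p ∧ a = (i : ℕ) + q ∧ b = (i : ℕ) + q ∧ x = 1 ∧ y = 0 ∨
       p ≤ (i : ℕ) ∧ (i : ℕ) < p + q ∧ a = (i : ℕ) - p ∧ b = (i : ℕ) - p + q ∧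
         x = -si ((i : ℕ) - p) ∧ y = co ((i : ℕ) - p) ∨
       p + q ≤ (i : ℕ) ∧ a = (i : ℕ) ∧ b = (i : ℕ) ∧ x = 1 ∧ y = 0) := by
    intro i
    by_cases hi1 : (i : ℕ) < q
    · refine ⟨(i : ℕ), (i : ℕ) + q, co i, si i, by omega, by omega, ?_, Or.inl ⟨hi1, rfl, rfl, rfl, rfl⟩⟩
      intro j
      simp [csdSigma, hi1, hco, hsi]
    · by_cases hi2 : (i : ℕ) < p
      · refine ⟨(i : ℕ) + q, (i : ℕ) + q, 1, 0, by omega, by omega, ?_,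
          Or.inr (Or.inl ⟨by omega, hi2, rfl, rfl, rfl, rfl⟩)⟩
        intro j
        simp [csdSigma, hi1, hi2]
      · by_cases hi3 : (i : ℕ) < p + q
        · refine ⟨(i : ℕ) - p, (i : ℕ) - p + q, -si ((i : ℕ) - p), co ((i : ℕ) - p),
            by omega, by omega, ?_, Or.inr (Or.inr (Or.inl ⟨by omega, hi3, rfl, rfl, rfl, rfl⟩))⟩
          intro j
          have h4 : (i : ℕ) - p < q := by omega
          simp [csdSigma, hi1, hi2, hi3, hco, hsi, h4]
        · refine ⟨(i : ℕ), (i : ℕ), 1, 0, by omega, by omega, ?_,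
            Or.inr (Or.inr (Or.inr ⟨by omega, rfl, rfl, rfl, rfl⟩))⟩
          intro j
          simp [csdSigma, hi1, hi2, hi3, Fin.ext_iff]
  ext i i'
  rw [Matrix.mul_apply, Matrix.one_apply]
  simp only [Matrix.transpose_apply]
  obtain ⟨a, b, x, y, ha, hb, hrowi, hcase⟩ := hrow i
  obtain ⟨a', b', x', y', ha', hb', hrowi', hcase'⟩ := hrow i'
  simp_rw [hrowi, hrowi']
  rw [two_ind_orth a b a' b' x y x' y' ha hb]
  have hii' : (i = i') ↔ ((i : ℕ) = (i' : ℕ)) := Fin.ext_iff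
  rw [if_congr hii' rfl rfl]
  rcases hcase with ⟨h1, rfl, rfl, rfl, rfl⟩ | ⟨h1, h2, rfl, rfl, rfl, rfl⟩ |
    ⟨h1, h2, rfl, rfl, rfl, rfl⟩ | ⟨h1, rfl, rfl, rfl, rfl⟩ <;>
    rcases hcase' with ⟨g1, rfl, rfl, rfl, rfl⟩ | ⟨g1, g2, rfl, rfl, rfl, rfl⟩ |
      ⟨g1, g2, rfl, rfl, rfl, rfl⟩ | ⟨g1, rfl, rfl, rfl, rfl⟩ <;>
    [skip; skip; skip; skip; skip; skip; skip; skip; skip; skip; skip; skip; skip; skip; skip; skip]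
  -- case (1,1)
  · by_cases h : (i : ℕ) = (i' : ℕ)
    · rw [if_pos h, if_neg (by omega), if_neg (by omega), if_pos (by omega), if_pos h, h]
      linear_combination hpy (i' : ℕ)
    · rw [if_neg h, if_neg (by omega), if_neg (by omega), if_neg (by omega), if_neg h]; ring
  -- (1,2)
  · rw [if_neg (by omega), if_neg (by omega), if_neg (by omega), if_neg (by omega),
      if_neg (by omega)]; ring
  -- (1,3)
  · by_cases h : (i : ℕ) = (i' : ℕ) - p
    · rw [if_pos h, if_neg (by omega), if_neg (by omega), if_pos (by omega), if_neg (by omega), h]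
      ring
    · rw [if_neg h, if_neg (by omega), if_neg (by omega), if_neg (by omega), if_neg (by omega)]
      ring
  -- (1,4)
  · rw [if_neg (by omega), if_neg (by omega), if_neg (by omega), if_neg (by omega),
      if_neg (by omega)]; ring
  -- (2,1)
  · rw [if_neg (by omega), if_neg (by omega), if_neg (by omega), if_neg (by omega),
      if_neg (by omega)]; ring
  -- (2,2)
  · by_cases h : (i : ℕ) = (i' : ℕ)
    · rw [if_pos (by omega), if_pos (by omega), if_pos (by omega), if_pos (by omega), if_pos h]
      ring
    · rw [if_neg (by omega), if_neg (by omega), if_neg (by omega), if_neg (by omega), if_neg h]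
      ring
  -- (2,3)
  · rw [if_neg (by omega), if_neg (by omega), if_neg (by omega), if_neg (by omega),
      if_neg (by omega)]; ring
  -- (2,4)
  · rw [if_neg (by omega), if_neg (by omega), if_neg (by omega), if_neg (by omega),
      if_neg (by omega)]; ring
  -- (3,1)
  · by_cases h : (i : ℕ) - p = (i' : ℕ)
    · rw [if_pos h, if_neg (by omega), if_neg (by omega), if_pos (by omega), if_neg (by omega), h]
      ring
    · rw [if_neg h, if_neg (by omega), if_neg (by omega), if_neg (by omega), if_neg (by omega)]
      ring
  -- (3,2)
  · rw [if_neg (by omega), if_neg (by omega), if_neg (by omega), if_neg (by omega),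
      if_neg (by omega)]; ring
  -- (3,3)
  · by_cases h : (i : ℕ) = (i' : ℕ)
    · rw [if_pos (by omega), if_neg (by omega), if_neg (by omega), if_pos (by omega), if_pos h, h]
      linear_combination hpy ((i' : ℕ) - p)
    · rw [if_neg (by omega), if_neg (by omega), if_neg (by omega), if_neg (by omega), if_neg h]
      ring
  -- (3,4)
  · rw [if_neg (by omega), if_neg (by omega), if_neg (by omega), if_neg (by omega),
      if_neg (by omega)]; ring
  -- (4,1)
  · rw [if_neg (by omega), if_neg (by omega), if_neg (by omega), if_neg (by omega),
      if_neg (by omega)]; ring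
  -- (4,2)
  · rw [if_neg (by omega), if_neg (by omega), if_neg (by omega), if_neg (by omega),
      if_neg (by omega)]; ring
  -- (4,3)
  · rw [if_neg (by omega), if_neg (by omega), if_neg (by omega), if_neg (by omega),
      if_neg (by omega)]; ring
  -- (4,4)
  · by_cases h : (i : ℕ) = (i' : ℕ)
    · rw [if_pos h, if_pos h, if_pos h, if_pos h, if_pos h]; ring
    · rw [if_neg h, if_neg h, if_neg h, if_neg h, if_neg h]; ring

lemma exists_unitary_extension {n q : ℕ} (h : q ≤ n) (M : Matrix (Fin n) (Fin q) ℂ)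
    (r : Fin q → ℝ)
    (hM : Mᴴ * M = Matrix.diagonal (fun i => ((r i : ℂ)) ^ 2)) :
    ∃ U ∈ Matrix.unitaryGroup (Fin n) ℂ,
      ∀ (i : Fin q) (k : Fin n), M k i = (r i : ℂ) * U k (Fin.castLE h i) := by
  classical
  have hMij : ∀ i j : Fin q, ∑ k, (starRingEnd ℂ) (M k i) * M k j
      = if i = j then ((r i : ℂ)) ^ 2 else 0 := by
    intro i j
    have h0 := congrFun (congrFun hM i) j
    simpa [Matrix.mul_apply, Matrix.conjTranspose_apply, Matrix.diagonal_apply] using h0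
  have hzero : ∀ i : Fin q, r i = 0 → ∀ k, M k i = 0 := by
    intro i hri k
    have h0 := hMij i i
    rw [if_pos rfl, hri] at h0
    norm_num at h0
    have hterm : ∀ k : Fin n, (starRingEnd ℂ) (M k i) * M k i = ↑(Complex.normSq (M k i)) :=
      fun k => by rw [mul_comm, Complex.mul_conj]
    rw [Finset.sum_congr rfl fun k _ => hterm k] at h0
    have h2 : ∑ k, Complex.normSq (M k i) = 0 := by exact_mod_cast h0
    have h3 := (Finset.sum_eq_zero_iff_of_nonneg
      (fun k _ => Complex.normSq_nonneg (M k i))).mp h2 k (Finset.mem_univ k)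
    exact Complex.normSq_eq_zero.mp h3
  set v : Fin n → EuclideanSpace ℂ (Fin n) := fun i =>
    if hi : (i : ℕ) < q then WithLp.toLp 2 (((r ⟨i, hi⟩ : ℂ))⁻¹ • (fun k => M k ⟨i, hi⟩ : Fin n → ℂ)) else 0 with hv
  set s : Set (Fin n) := {i | ∃ hi : (i : ℕ) < q, r ⟨i, hi⟩ ≠ 0} with hs
  have horth : Orthonormal ℂ (s.restrict v) := by
    rw [orthonormal_iff_ite]
    rintro ⟨i, hi1, hi2⟩ ⟨j, hj1, hj2⟩
    show inner ℂ (v i) (v j) = _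
    simp only [hv]
    rw [dif_pos hi1, dif_pos hj1]
    rw [PiLp.inner_apply]
    simp only [RCLike.inner_apply, PiLp.toLp_apply, PiLp.smul_apply, Pi.smul_apply, smul_eq_mul,
      _root_.map_mul]
    have : ∀ k, (starRingEnd ℂ) ((r ⟨i, hi1⟩ : ℂ))⁻¹ * (starRingEnd ℂ) (M k ⟨i, hi1⟩) *
        (((r ⟨j, hj1⟩ : ℂ))⁻¹ * M k ⟨j, hj1⟩)
        = ((r ⟨i, hi1⟩ : ℂ))⁻¹ * ((r ⟨j, hj1⟩ : ℂ))⁻¹ *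
          ((starRingEnd ℂ) (M k ⟨i, hi1⟩) * M k ⟨j, hj1⟩) := by
      intro k
      rw [Complex.conj_inv, Complex.conj_ofReal]
      ring
    rw [Finset.sum_congr rfl fun k _ => (mul_comm _ _).trans (this k), ← Finset.mul_sum, hMij]
    by_cases hij : (⟨i, hi1⟩ : Fin q) = ⟨j, hj1⟩
    · have hvv : (i : ℕ) = (j : ℕ) := congrArg (Fin.val (n := q)) hij
      have hij' : (⟨i, hi1, hi2⟩ : s) = ⟨j, hj1, hj2⟩ := Subtype.ext (Fin.ext hvv)
      rw [if_pos hij, if_pos hij']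
      rw [← hij]
      have hr : (r ⟨i, hi1⟩ : ℂ) ≠ 0 := by exact_mod_cast hi2
      field_simp
    · rw [if_neg hij, if_neg (fun hc => hij
        (Fin.ext (congrArg (Fin.val (n := n)) (Subtype.ext_iff.mp hc))))]
      ring
  have hcard : Module.finrank ℂ (EuclideanSpace ℂ (Fin n)) = Fintype.card (Fin n) := by
    simp
  obtain ⟨b, hb⟩ := horth.exists_orthonormalBasis_extension_of_card_eq hcard
  refine ⟨Matrix.of fun k i => b i k, ?_, ?_⟩
  · rw [Matrix.mem_unitaryGroup_iff']
    ext i j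
    rw [Matrix.mul_apply, Matrix.one_apply]
    have hob := orthonormal_iff_ite.mp b.orthonormal i j
    rw [PiLp.inner_apply] at hob
    simpa [Matrix.star_apply, mul_comm] using hob
  · intro i k
    by_cases hri : r i = 0
    · rw [hzero i hri k, hri]
      simp
    · have hmem : Fin.castLE h i ∈ s := ⟨i.2, by simpa [Fin.eta] using hri⟩
      have hbv := hb _ hmem
      show M k i = ↑(r i) * b (Fin.castLE h i) k
      rw [hbv]
      simp only [hv]
      rw [dif_pos (show ((Fin.castLE h i : Fin n) : ℕ) < q from i.2)]
      simp only [Fin.coe_castLE, Fin.eta, PiLp.toLp_apply, PiLp.smul_apply, Pi.smul_apply, smul_eq_mul]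
      have hr : (r i : ℂ) ≠ 0 := by exact_mod_cast hri
      field_simp

lemma diag_nonneg {n q : ℕ} (M : Matrix (Fin n) (Fin q) ℂ) (f : Fin q → ℝ)
    (hM : Mᴴ * M = Matrix.diagonal fun i => (f i : ℂ)) : ∀ i, 0 ≤ f i := by
  intro i
  have h0 := congrFun (congrFun hM i) i
  simp only [Matrix.mul_apply, Matrix.conjTranspose_apply, Matrix.diagonal_apply_eq,
    RCLike.star_def] at h0
  have hterm : ∀ k : Fin n, (starRingEnd ℂ) (M k i) * M k i = ↑(Complex.normSq (M k i)) :=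
    fun k => by rw [mul_comm, Complex.mul_conj]
  rw [Finset.sum_congr rfl fun k _ => hterm k] at h0
  have h2 : ∑ k, Complex.normSq (M k i) = f i := by exact_mod_cast h0
  rw [← h2]
  exact Finset.sum_nonneg fun k _ => Complex.normSq_nonneg _

set_option maxHeartbeats 2000000 in
/-- The complete CS decomposition of a partitioned unitary matrix. -/
theorem complete_csd (m p q : ℕ) (hqp : q ≤ p) (hpqm : p + q ≤ m)
    (X : Matrix (Fin m) (Fin m) ℂ) (hX : X ∈ Matrix.unitaryGroup (Fin m) ℂ) :
    ∃ (U₁ : Matrix (Fin p) (Fin p) ℂ) (U₂ : Matrix (Fin (m - p)) (Fin (m - p)) ℂ)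
      (V₁ : Matrix (Fin q) (Fin q) ℂ) (V₂ : Matrix (Fin (m - q)) (Fin (m - q)) ℂ)
      (θ : Fin q → ℝ),
      U₁ ∈ Matrix.unitaryGroup (Fin p) ℂ ∧
      U₂ ∈ Matrix.unitaryGroup (Fin (m - p)) ℂ ∧
      V₁ ∈ Matrix.unitaryGroup (Fin q) ℂ ∧
      V₂ ∈ Matrix.unitaryGroup (Fin (m - q)) ℂ ∧
      (∀ i, θ i ∈ Set.Icc 0 (Real.pi / 2)) ∧
      X = blockDiagC m p (by omega) U₁ U₂ *
            (csdSigma m p q θ).map Complex.ofReal *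
            (blockDiagC m q (by omega) V₁ V₂)ᴴ := by
  classical
  have hpm : p ≤ m := by omega
  have hqm : q ≤ m := by omega
  have hqmp : q ≤ m - p := by omega
  -- blocks of X
  set A : Matrix (Fin p) (Fin q) ℂ :=
    fun a b => X (Fin.castLE hpm a) (Fin.castLE hqm b) with hA
  set B : Matrix (Fin (m - p)) (Fin q) ℂ :=
    fun a b => X ⟨p + a, by omega⟩ (Fin.castLE hqm b) with hB
  -- A^H A + B^H B = 1
  have hABsum : Aᴴ * A + Bᴴ * B = 1 := by
    ext a b
    have h0 := congrFun (congrFun (Matrix.mem_unitaryGroup_iff'.mp hX)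
      (Fin.castLE hqm a)) (Fin.castLE hqm b)
    rw [Matrix.star_eq_conjTranspose] at h0
    simp only [Matrix.mul_apply, Matrix.conjTranspose_apply] at h0
    rw [sum_fin_split m p hpm] at h0
    have h1 : (1 : Matrix (Fin q) (Fin q) ℂ) a b
        = (1 : Matrix (Fin m) (Fin m) ℂ) (Fin.castLE hqm a) (Fin.castLE hqm b) := by
      rw [Matrix.one_apply, Matrix.one_apply]
      refine if_congr ?_ rfl rfl
      constructor
      · intro hh; rw [hh]
      · intro hh; exact Fin.ext (congrArg (Fin.val (n := m)) hh)
    rw [Matrix.add_apply, Matrix.mul_apply, Matrix.mul_apply, h1, ← h0]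
    simp only [Matrix.conjTranspose_apply, hA, hB]
    rfl
  -- spectral theorem for A^H A
  have hG : (Aᴴ * A).IsHermitian := Matrix.isHermitian_conjTranspose_mul_self A
  set d : Fin q → ℝ := hG.eigenvalues with hd
  set V₁ : Matrix (Fin q) (Fin q) ℂ := (hG.eigenvectorUnitary : Matrix (Fin q) (Fin q) ℂ)
    with hV₁
  have hV₁mem : V₁ ∈ Matrix.unitaryGroup (Fin q) ℂ := hG.eigenvectorUnitary.2
  have hdiag : V₁ᴴ * (Aᴴ * A) * V₁ = Matrix.diagonal fun i => ((d i : ℝ) : ℂ) := by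
    have := hG.conjStarAlgAut_star_eigenvectorUnitary; rw [Unitary.conjStarAlgAut_star_apply] at this
    rw [Matrix.star_eq_conjTranspose] at this
    exact this
  have hA' : (A * V₁)ᴴ * (A * V₁) = Matrix.diagonal fun i => ((d i : ℝ) : ℂ) := by
    rw [Matrix.conjTranspose_mul, ← hdiag]
    simp only [Matrix.mul_assoc]
  have hB' : (B * V₁)ᴴ * (B * V₁) = Matrix.diagonal fun i => ((1 - d i : ℝ) : ℂ) := by
    have hBB : Bᴴ * B = 1 - Aᴴ * A := eq_sub_of_add_eq' hABsum
    have hVV : V₁ᴴ * V₁ = 1 := by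
      rw [← Matrix.star_eq_conjTranspose]
      exact Matrix.mem_unitaryGroup_iff'.mp hV₁mem
    calc (B * V₁)ᴴ * (B * V₁) = V₁ᴴ * (Bᴴ * B) * V₁ := by
          rw [Matrix.conjTranspose_mul]; simp only [Matrix.mul_assoc]
      _ = V₁ᴴ * (1 - Aᴴ * A) * V₁ := by rw [hBB]
      _ = V₁ᴴ * V₁ - V₁ᴴ * (Aᴴ * A) * V₁ := by
          rw [Matrix.mul_sub, Matrix.sub_mul, Matrix.mul_one]
      _ = 1 - Matrix.diagonal fun i => ((d i : ℝ) : ℂ) := by rw [hdiag, hVV]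
      _ = Matrix.diagonal fun i => ((1 - d i : ℝ) : ℂ) := by
          rw [← Matrix.diagonal_one, Matrix.diagonal_sub]
          refine congrArg Matrix.diagonal (funext fun i => ?_)
          push_cast
          ring
  -- eigenvalue bounds and angles
  have hd0 : ∀ i, 0 ≤ d i := diag_nonneg (A * V₁) d hA'
  have hd1 : ∀ i, d i ≤ 1 := by
    intro i
    have := diag_nonneg (B * V₁) (fun i => 1 - d i) hB' i
    linarith
  set θ : Fin q → ℝ := fun i => Real.arccos (Real.sqrt (d i)) with hθdef
  have hθmem : ∀ i, θ i ∈ Set.Icc 0 (Real.pi / 2) :=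
    fun i => ⟨Real.arccos_nonneg _, Real.arccos_le_pi_div_two.mpr (Real.sqrt_nonneg _)⟩
  set c : Fin q → ℝ := fun i => Real.cos (θ i) with hcdef
  set s : Fin q → ℝ := fun i => Real.sin (θ i) with hsdef
  have hcs : ∀ i, c i = Real.sqrt (d i) := fun i =>
    Real.cos_arccos (by linarith [Real.sqrt_nonneg (d i)]) (Real.sqrt_le_one.mpr (hd1 i))
  have hss : ∀ i, s i = Real.sqrt (1 - d i) := by
    intro i
    rw [hsdef]
    show Real.sin (θ i) = _
    rw [hθdef]
    show Real.sin (Real.arccos _) = _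
    rw [Real.sin_arccos, Real.sq_sqrt (hd0 i)]
  have hc2 : ∀ i, ((c i : ℝ) : ℂ) ^ 2 = ((d i : ℝ) : ℂ) := by
    intro i
    rw [hcs, ← Complex.ofReal_pow, Real.sq_sqrt (hd0 i)]
  have hs2 : ∀ i, ((s i : ℝ) : ℂ) ^ 2 = ((1 - d i : ℝ) : ℂ) := by
    intro i
    rw [hss, ← Complex.ofReal_pow, Real.sq_sqrt (by linarith [hd1 i])]
  -- unitary extensions
  obtain ⟨U₁, hU₁mem, hU₁col⟩ := exists_unitary_extension hqp (A * V₁) c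
    (by rw [hA']; exact congrArg Matrix.diagonal (funext fun i => (hc2 i).symm))
  obtain ⟨U₂, hU₂mem, hU₂col⟩ := exists_unitary_extension hqmp (-(B * V₁)) s (by
    rw [Matrix.conjTranspose_neg, Matrix.neg_mul, Matrix.mul_neg, neg_neg, hB']
    exact congrArg Matrix.diagonal (funext fun i => (hs2 i).symm))
  -- the three factors
  set DU := blockDiagC m p hpm U₁ U₂ with hDU
  set DV1 := blockDiagC m q hqm V₁ 1 with hDV1
  set Z := (csdSigma m p q θ).map Complex.ofReal with hZ
  have hmapmul : ∀ P Q : Matrix (Fin m) (Fin m) ℝ,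
      (P * Q).map Complex.ofReal = P.map Complex.ofReal * Q.map Complex.ofReal := by
    intro P Q
    exact Matrix.map_mul (f := Complex.ofRealHom)
  have hZH : Zᴴ = ((csdSigma m p q θ)ᵀ).map Complex.ofReal := by
    ext i j
    simp only [hZ, Matrix.conjTranspose_apply, Matrix.map_apply, Matrix.transpose_apply,
      RCLike.star_def, Complex.conj_ofReal]
  have hZmem : Z ∈ Matrix.unitaryGroup (Fin m) ℂ := by
    rw [Matrix.mem_unitaryGroup_iff, Matrix.star_eq_conjTranspose, hZH, hZ, ← hmapmul,
      csdSigma_mul_transpose m p q hqp hpqm θ]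
    exact Matrix.map_one _ Complex.ofReal_zero Complex.ofReal_one
  -- column structure of Z in the first q columns
  have hZcol : ∀ (j k : Fin m) (hj : (j : ℕ) < q),
      Z k j = (if (k : ℕ) = (j : ℕ) then ((Real.cos (θ ⟨(j : ℕ), hj⟩) : ℝ) : ℂ) else 0)
        + (if (k : ℕ) = p + (j : ℕ) then -((Real.sin (θ ⟨(j : ℕ), hj⟩) : ℝ) : ℂ) else 0) := by
    intro j k hj
    simp only [hZ, Matrix.map_apply, csdSigma]
    by_cases hk1 : (k : ℕ) < q
    · rw [dif_pos hk1, if_neg (show ¬(j : ℕ) = (k : ℕ) + q by omega),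
        if_neg (show ¬(k : ℕ) = p + (j : ℕ) by omega), add_zero, add_zero]
      by_cases hkj : (j : ℕ) = (k : ℕ)
      · rw [if_pos hkj, if_pos hkj.symm]
        have he : (⟨(k : ℕ), hk1⟩ : Fin q) = ⟨(j : ℕ), hj⟩ := Fin.ext hkj.symm
        rw [he]
      · rw [if_neg hkj, if_neg (fun hh => hkj hh.symm), Complex.ofReal_zero]
    · by_cases hk2 : (k : ℕ) < p
      · rw [dif_neg hk1, dif_pos hk2, if_neg (show ¬(j : ℕ) = (k : ℕ) + q by omega),
          if_neg (show ¬(k : ℕ) = (j : ℕ) by omega),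
          if_neg (show ¬(k : ℕ) = p + (j : ℕ) by omega), Complex.ofReal_zero, add_zero]
      · by_cases hk3 : (k : ℕ) < p + q
        · rw [dif_neg hk1, dif_neg hk2, dif_pos hk3,
            if_neg (show ¬(j : ℕ) = (k : ℕ) - p + q by omega), add_zero,
            if_neg (show ¬(k : ℕ) = (j : ℕ) by omega), zero_add]
          by_cases hkj : (j : ℕ) = (k : ℕ) - p
          · rw [if_pos hkj, if_pos (show (k : ℕ) = p + (j : ℕ) by omega)]
            have he : (⟨(k : ℕ) - p, by omega⟩ : Fin q) = ⟨(j : ℕ), hj⟩ := Fin.ext hkj.symm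
            rw [he, Complex.ofReal_neg]
          · rw [if_neg hkj, if_neg (show ¬(k : ℕ) = p + (j : ℕ) by omega), Complex.ofReal_zero]
        · rw [dif_neg hk1, dif_neg hk2, dif_neg hk3,
            if_neg (show ¬j = k from fun hh => by
              have := congrArg (Fin.val (n := m)) hh; omega),
            if_neg (show ¬(k : ℕ) = (j : ℕ) by omega),
            if_neg (show ¬(k : ℕ) = p + (j : ℕ) by omega), Complex.ofReal_zero, add_zero]
  -- key column identity
  have hkey : ∀ (i j : Fin m), (j : ℕ) < q → (X * DV1) i j = (DU * Z) i j := by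
    intro i j hj
    have hrhs : (DU * Z) i j
        = DU i ⟨(j : ℕ), by omega⟩ * ((Real.cos (θ ⟨(j : ℕ), hj⟩) : ℝ) : ℂ)
          + DU i ⟨p + (j : ℕ), by omega⟩ * (-((Real.sin (θ ⟨(j : ℕ), hj⟩) : ℝ) : ℂ)) := by
      rw [Matrix.mul_apply, Finset.sum_congr rfl fun k _ => by rw [hZcol j k hj]]
      simp_rw [mul_add, Finset.sum_add_distrib]
      rw [sum_single_right (fun k => DU i k) (j : ℕ) _ (by omega),
        sum_single_right (fun k => DU i k) (p + (j : ℕ)) _ (by omega)]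
    have hlhs : (X * DV1) i j = ∑ t : Fin q, X i (Fin.castLE hqm t) * V₁ t ⟨(j : ℕ), hj⟩ := by
      rw [Matrix.mul_apply, sum_fin_split m q hqm]
      have hz : ∀ t : Fin (m - q),
          X i ⟨q + (t : ℕ), by omega⟩ * DV1 ⟨q + (t : ℕ), by omega⟩ j = 0 := by
        intro t
        rw [hDV1, blockDiagC_apply, dif_neg (show ¬q + (t : ℕ) < q by omega), dif_pos hj,
          mul_zero]
      rw [Finset.sum_congr rfl fun t _ => hz t, Finset.sum_const_zero, add_zero]
      refine Finset.sum_congr rfl fun t _ => ?_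
      rw [hDV1, blockDiagC_apply, dif_pos (show ((Fin.castLE hqm t : Fin m) : ℕ) < q from t.2),
        dif_pos hj]
      congr 2
    rw [hlhs, hrhs]
    by_cases hi : (i : ℕ) < p
    · have hAe : ∑ t : Fin q, X i (Fin.castLE hqm t) * V₁ t ⟨(j : ℕ), hj⟩
          = (A * V₁) ⟨(i : ℕ), hi⟩ ⟨(j : ℕ), hj⟩ := by
        rw [Matrix.mul_apply]
        exact Finset.sum_congr rfl fun t _ => by congr 1
      rw [hAe, hU₁col ⟨(j : ℕ), hj⟩ ⟨(i : ℕ), hi⟩, hDU, blockDiagC_apply, blockDiagC_apply,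
        dif_pos hi, dif_pos hi, dif_pos (show (j : ℕ) < p by omega),
        dif_neg (show ¬p + (j : ℕ) < p by omega)]
      simp only [hcdef]
      have hcast : Fin.castLE hqp ⟨(j : ℕ), hj⟩ = (⟨(j : ℕ), by omega⟩ : Fin p) := Fin.ext rfl
      rw [hcast]
      ring
    · have hBe : ∑ t : Fin q, X i (Fin.castLE hqm t) * V₁ t ⟨(j : ℕ), hj⟩
          = (B * V₁) ⟨(i : ℕ) - p, by omega⟩ ⟨(j : ℕ), hj⟩ := by
        rw [Matrix.mul_apply]
        refine Finset.sum_congr rfl fun t _ => ?_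
        congr 2
        apply Fin.ext
        simp
        omega
      have hU₂e := hU₂col ⟨(j : ℕ), hj⟩ ⟨(i : ℕ) - p, by omega⟩
      rw [Matrix.neg_apply] at hU₂e
      rw [hBe, show (B * V₁) ⟨(i : ℕ) - p, by omega⟩ ⟨(j : ℕ), hj⟩
          = -(((s ⟨(j : ℕ), hj⟩ : ℝ) : ℂ)
            * U₂ ⟨(i : ℕ) - p, by omega⟩ (Fin.castLE hqmp ⟨(j : ℕ), hj⟩)) by
          rw [← hU₂e]; ring,
        hDU, blockDiagC_apply, blockDiagC_apply, dif_neg hi, dif_neg hi,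
        dif_pos (show (j : ℕ) < p by omega),
        dif_neg (show ¬p + (j : ℕ) < p by omega)]
      simp only [hsdef]
      have he2 : (⟨p + (j : ℕ) - p, by omega⟩ : Fin (m - p))
          = Fin.castLE hqmp ⟨(j : ℕ), hj⟩ := by
        apply Fin.ext
        show p + (j : ℕ) - p = (j : ℕ)
        omega
      rw [he2]
      ring
  -- assemble
  have hmemHH : ∀ {M : Matrix (Fin m) (Fin m) ℂ}, M ∈ Matrix.unitaryGroup (Fin m) ℂ →
      Mᴴ * M = 1 ∧ M * Mᴴ = 1 := by
    intro M hM
    constructor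
    · rw [← Matrix.star_eq_conjTranspose]; exact Matrix.mem_unitaryGroup_iff'.mp hM
    · rw [← Matrix.star_eq_conjTranspose]; exact Matrix.mem_unitaryGroup_iff.mp hM
  have hDUmem : DU ∈ Matrix.unitaryGroup (Fin m) ℂ :=
    blockDiagC_mem m p hpm U₁ U₂ hU₁mem hU₂mem
  have hDV1mem : DV1 ∈ Matrix.unitaryGroup (Fin m) ℂ :=
    blockDiagC_mem m q hqm V₁ 1 hV₁mem (one_mem _)
  set Y := DUᴴ * (X * DV1) with hY
  have hYmem : Y ∈ Matrix.unitaryGroup (Fin m) ℂ := by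
    rw [hY, ← Matrix.star_eq_conjTranspose]
    exact mul_mem (Unitary.star_mem hDUmem) (mul_mem hX hDV1mem)
  have hYcol : ∀ (i j : Fin m), (j : ℕ) < q → Y i j = Z i j := by
    intro i j hj
    rw [hY, Matrix.mul_apply, Finset.sum_congr rfl fun k _ => by rw [hkey k j hj],
      show ∑ k, DUᴴ i k * (DU * Z) k j = (DUᴴ * (DU * Z)) i j from (Matrix.mul_apply).symm,
      ← Matrix.mul_assoc, (hmemHH hDUmem).1, Matrix.one_mul]
  set W := Yᴴ * Z with hWdef
  have hWmem : W ∈ Matrix.unitaryGroup (Fin m) ℂ := by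
    rw [hWdef, ← Matrix.star_eq_conjTranspose]
    exact mul_mem (Unitary.star_mem hYmem) hZmem
  have hWleft : ∀ j k : Fin m, (k : ℕ) < q →
      W j k = (1 : Matrix (Fin m) (Fin m) ℂ) j k := by
    intro j k hk
    rw [hWdef, Matrix.mul_apply, Finset.sum_congr rfl fun l _ => by rw [← hYcol l k hk],
      show ∑ l, Yᴴ j l * Y l k = (Yᴴ * Y) j k from (Matrix.mul_apply).symm, (hmemHH hYmem).1]
  have hWtop : ∀ j k : Fin m, (j : ℕ) < q →
      W j k = (1 : Matrix (Fin m) (Fin m) ℂ) j k := by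
    intro j k hjq
    rw [hWdef, Matrix.mul_apply, Finset.sum_congr rfl fun l _ => by
        rw [Matrix.conjTranspose_apply, hYcol l j hjq, ← Matrix.conjTranspose_apply],
      show ∑ l, Zᴴ j l * Z l k = (Zᴴ * Z) j k from (Matrix.mul_apply).symm, (hmemHH hZmem).1]
  set V₂ : Matrix (Fin (m - q)) (Fin (m - q)) ℂ :=
    fun a b => W ⟨q + (a : ℕ), by omega⟩ ⟨q + (b : ℕ), by omega⟩ with hV₂
  have hWeq : W = blockDiagC m q hqm 1 V₂ := by
    ext j k
    rw [blockDiagC_apply]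
    by_cases hjq : (j : ℕ) < q
    · rw [dif_pos hjq, hWtop j k hjq, Matrix.one_apply]
      by_cases hkq : (k : ℕ) < q
      · rw [dif_pos hkq, Matrix.one_apply]
        refine if_congr ?_ rfl rfl
        constructor
        · intro hh
          exact Fin.ext (congrArg (Fin.val (n := m)) hh)
        · intro hh
          exact Fin.ext (congrArg (Fin.val (n := q)) hh)
      · rw [dif_neg hkq, if_neg (fun hh => hkq (by rw [← hh]; exact hjq))]
    · rw [dif_neg hjq]
      by_cases hkq : (k : ℕ) < q
      · rw [dif_pos hkq, hWleft j k hkq, Matrix.one_apply,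
          if_neg (fun hh => hjq (by rw [hh]; exact hkq))]
      · rw [dif_neg hkq]
        show W j k = W ⟨q + ((j : ℕ) - q), by omega⟩ ⟨q + ((k : ℕ) - q), by omega⟩
        congr 1 <;> exact Fin.ext (by show _ = q + _; omega)
  have hV₂mem : V₂ ∈ Matrix.unitaryGroup (Fin (m - q)) ℂ := by
    have h1 := (hmemHH hWmem).1
    rw [hWeq, blockDiagC_conjTranspose, blockDiagC_mul] at h1
    rw [Matrix.mem_unitaryGroup_iff', Matrix.star_eq_conjTranspose]
    ext a b
    have h2 := congrFun (congrFun h1 ⟨q + (a : ℕ), by omega⟩) ⟨q + (b : ℕ), by omega⟩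
    rw [blockDiagC_apply, dif_neg (show ¬q + (a : ℕ) < q by omega),
      dif_neg (show ¬q + (b : ℕ) < q by omega)] at h2
    have h3 : (⟨q + (a : ℕ) - q, by omega⟩ : Fin (m - q)) = a := Fin.ext (by
      show q + (a : ℕ) - q = (a : ℕ); omega)
    have h4 : (⟨q + (b : ℕ) - q, by omega⟩ : Fin (m - q)) = b := Fin.ext (by
      show q + (b : ℕ) - q = (b : ℕ); omega)
    rw [h3, h4] at h2
    rw [h2, Matrix.one_apply, Matrix.one_apply]
    refine if_congr ?_ rfl rfl
    constructor
    · intro hh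
      have h5 : q + (a : ℕ) = q + (b : ℕ) := congrArg (Fin.val (n := m)) hh
      exact Fin.ext (by omega)
    · intro hh
      have h6 : (a : ℕ) = (b : ℕ) := congrArg (Fin.val (n := m - q)) hh
      exact Fin.ext (show q + (a : ℕ) = q + (b : ℕ) by omega)
  refine ⟨U₁, U₂, V₁, V₂, θ, hU₁mem, hU₂mem, hV₁mem, hV₂mem, hθmem, ?_⟩
  have hZY : Z = Y * W := by
    rw [hWdef, ← Matrix.mul_assoc, (hmemHH hYmem).2, Matrix.one_mul]
  have hBDmem : blockDiagC m q hqm 1 V₂ ∈ Matrix.unitaryGroup (Fin m) ℂ := hWeq ▸ hWmem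
  have hDVsplit : blockDiagC m q hqm V₁ V₂ = DV1 * blockDiagC m q hqm 1 V₂ := by
    rw [hDV1, blockDiagC_mul, Matrix.mul_one, Matrix.one_mul]
  show X = DU * Z * (blockDiagC m q hqm V₁ V₂)ᴴ
  rw [hZY, hWeq, hY, hDVsplit, Matrix.conjTranspose_mul]
  simp only [← Matrix.mul_assoc]
  rw [(hmemHH hDUmem).2, Matrix.one_mul,
    Matrix.mul_assoc (X * DV1) (blockDiagC m q hqm 1 V₂) _, (hmemHH hBDmem).2,
    Matrix.mul_one, Matrix.mul_assoc X DV1 DV1ᴴ, (hmemHH hDV1mem).2, Matrix.mul_one]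
end

section
/- For every θ = (θ₁, …, θ_q) ∈ [0, π/2]^q and φ = (φ₁, …, φ_{q−1}) ∈ [0, π/2]^{q−1}, the 2q-by-2q real matrix [[B₁₁(θ,φ), B₁₂(θ,φ)], [B₂₁(θ,φ), B₂₂(θ,φ)]] in bidiagonal block form is orthogonal. -/
open Matrix

/-- `B₁₁(θ,φ)`: upper bidiagonal, `(i,i)` entry `cos θᵢ · cos φᵢ₋₁` (with the
convention `cos φ₀ = 1`, 1-based indexing), `(i,i+1)` entry `−sin θᵢ · sin φᵢ`. -/
noncomputable def bdbB11 (q : ℕ) (θ : Fin q → ℝ) (φ : Fin (q - 1) → ℝ) :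
    Matrix (Fin q) (Fin q) ℝ :=
  fun i j =>
    if j.val = i.val then
      Real.cos (θ i) *
        (if h : 0 < i.val then Real.cos (φ ⟨i.val - 1, by have := i.isLt; omega⟩) else 1)
    else if h : j.val = i.val + 1 then
      -(Real.sin (θ i) * Real.sin (φ ⟨i.val, by have := j.isLt; omega⟩))
    else 0

/-- `B₁₂(θ,φ)`: lower bidiagonal, `(i,i)` entry `sin θᵢ · cos φᵢ` for `i < q`,
`(q,q)` entry `sin θ_q`, and `(i+1,i)` entry `cos θᵢ₊₁ · sin φᵢ` (1-based indexing). -/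
noncomputable def bdbB12 (q : ℕ) (θ : Fin q → ℝ) (φ : Fin (q - 1) → ℝ) :
    Matrix (Fin q) (Fin q) ℝ :=
  fun i j =>
    if j.val = i.val then
      Real.sin (θ i) * (if h : i.val < q - 1 then Real.cos (φ ⟨i.val, h⟩) else 1)
    else if h : i.val = j.val + 1 then
      Real.cos (θ i) * Real.sin (φ ⟨j.val, by have := i.isLt; omega⟩)
    else 0

/-- `B₂₁(θ,φ)`: upper bidiagonal, `(i,i)` entry `−sin θᵢ · cos φᵢ₋₁` (with the
convention `cos φ₀ = 1`), `(i,i+1)` entry `−cos θᵢ · sin φᵢ` (1-based indexing). -/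
noncomputable def bdbB21 (q : ℕ) (θ : Fin q → ℝ) (φ : Fin (q - 1) → ℝ) :
    Matrix (Fin q) (Fin q) ℝ :=
  fun i j =>
    if j.val = i.val then
      -(Real.sin (θ i) *
        (if h : 0 < i.val then Real.cos (φ ⟨i.val - 1, by have := i.isLt; omega⟩) else 1))
    else if h : j.val = i.val + 1 then
      -(Real.cos (θ i) * Real.sin (φ ⟨i.val, by have := j.isLt; omega⟩))
    else 0

/-- `B₂₂(θ,φ)`: lower bidiagonal, `(i,i)` entry `cos θᵢ · cos φᵢ` for `i < q`,
`(q,q)` entry `cos θ_q`, and `(i+1,i)` entry `−sin θᵢ₊₁ · sin φᵢ` (1-based indexing). -/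
noncomputable def bdbB22 (q : ℕ) (θ : Fin q → ℝ) (φ : Fin (q - 1) → ℝ) :
    Matrix (Fin q) (Fin q) ℝ :=
  fun i j =>
    if j.val = i.val then
      Real.cos (θ i) * (if h : i.val < q - 1 then Real.cos (φ ⟨i.val, h⟩) else 1)
    else if h : i.val = j.val + 1 then
      -(Real.sin (θ i) * Real.sin (φ ⟨j.val, by have := i.isLt; omega⟩))
    else 0

noncomputable def bdbCp (q : ℕ) (φ : Fin (q - 1) → ℝ) (n : ℕ) : ℝ :=
  if h : n < q - 1 then Real.cos (φ ⟨n, h⟩) else 1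

noncomputable def bdbSp (q : ℕ) (φ : Fin (q - 1) → ℝ) (n : ℕ) : ℝ :=
  if h : n < q - 1 then Real.sin (φ ⟨n, h⟩) else 0

lemma bdbCpSp (q : ℕ) (φ : Fin (q - 1) → ℝ) (n : ℕ) :
    bdbCp q φ n ^ 2 + bdbSp q φ n ^ 2 = 1 := by
  unfold bdbCp bdbSp
  split_ifs with h
  · exact Real.cos_sq_add_sin_sq _
  · norm_num

lemma bdbB11_eq (q : ℕ) (θ : Fin q → ℝ) (φ : Fin (q - 1) → ℝ) (i j : Fin q) :
    bdbB11 q θ φ i j =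
      if (j : ℕ) = (i : ℕ) then
        Real.cos (θ i) * (if (i : ℕ) = 0 then 1 else bdbCp q φ ((i : ℕ) - 1))
      else if (j : ℕ) = (i : ℕ) + 1 then -(Real.sin (θ i) * bdbSp q φ (i : ℕ))
      else 0 := by
  have hi := i.isLt; have hj := j.isLt
  unfold bdbB11 bdbCp bdbSp
  split_ifs <;> first | rfl | omega

lemma bdbB12_eq (q : ℕ) (θ : Fin q → ℝ) (φ : Fin (q - 1) → ℝ) (i j : Fin q) :
    bdbB12 q θ φ i j =
      if (j : ℕ) = (i : ℕ) then Real.sin (θ i) * bdbCp q φ (i : ℕ)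
      else if (i : ℕ) = (j : ℕ) + 1 then Real.cos (θ i) * bdbSp q φ (j : ℕ)
      else 0 := by
  have hi := i.isLt; have hj := j.isLt
  unfold bdbB12 bdbCp bdbSp
  split_ifs <;> first | rfl | omega

lemma bdbB21_eq (q : ℕ) (θ : Fin q → ℝ) (φ : Fin (q - 1) → ℝ) (i j : Fin q) :
    bdbB21 q θ φ i j =
      if (j : ℕ) = (i : ℕ) then
        -(Real.sin (θ i) * (if (i : ℕ) = 0 then 1 else bdbCp q φ ((i : ℕ) - 1)))
      else if (j : ℕ) = (i : ℕ) + 1 then -(Real.cos (θ i) * bdbSp q φ (i : ℕ))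
      else 0 := by
  have hi := i.isLt; have hj := j.isLt
  unfold bdbB21 bdbCp bdbSp
  split_ifs <;> first | rfl | omega

lemma bdbB22_eq (q : ℕ) (θ : Fin q → ℝ) (φ : Fin (q - 1) → ℝ) (i j : Fin q) :
    bdbB22 q θ φ i j =
      if (j : ℕ) = (i : ℕ) then Real.cos (θ i) * bdbCp q φ (i : ℕ)
      else if (i : ℕ) = (j : ℕ) + 1 then -(Real.sin (θ i) * bdbSp q φ (j : ℕ))
      else 0 := by
  have hi := i.isLt; have hj := j.isLt
  unfold bdbB22 bdbCp bdbSp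
  split_ifs <;> first | rfl | omega

lemma bdb_sum_one {q : ℕ} (f : Fin q → ℝ) (a : Fin q) (h : ∀ i, i ≠ a → f i = 0) :
    ∑ i, f i = f a :=
  Finset.sum_eq_single_of_mem a (Finset.mem_univ a) fun i _ hi => h i hi

lemma bdb_sum_two {q : ℕ} (f : Fin q → ℝ) (a b : Fin q) (hab : a ≠ b)
    (h : ∀ i, i ≠ a → i ≠ b → f i = 0) : ∑ i, f i = f a + f b := by
  rw [← Finset.sum_pair hab]
  exact (Finset.sum_subset (Finset.subset_univ _) fun i _ hi => by
    simp only [Finset.mem_insert, Finset.mem_singleton, not_or] at hi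
    exact h i hi.1 hi.2).symm

lemma bdb_col1 (q : ℕ) (θ : Fin q → ℝ) (φ : Fin (q - 1) → ℝ) (a b : Fin q) :
    (∑ i, (bdbB11 q θ φ i a * bdbB11 q θ φ i b + bdbB21 q θ φ i a * bdbB21 q θ φ i b)) =
      if a = b then 1 else 0 := by
  simp only [bdbB11_eq, bdbB21_eq]
  rcases eq_or_ne a b with rfl | hab
  · rw [if_pos rfl]
    rcases Nat.eq_zero_or_pos (a : ℕ) with h0 | h0
    · rw [bdb_sum_one _ a ?_]
      · split_ifs <;> first | (exfalso; omega) | tauto |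
          linear_combination Real.sin_sq_add_cos_sq (θ a)
      · intro i hi
        have hv : (i : ℕ) ≠ (a : ℕ) := fun h => hi (Fin.ext h)
        split_ifs <;> first | ring1 | (exfalso; omega) | tauto
    · have hlt : (a : ℕ) - 1 < q := by omega
      have hne : a ≠ (⟨(a : ℕ) - 1, hlt⟩ : Fin q) :=
        Fin.ne_of_val_ne (show (a : ℕ) ≠ (a : ℕ) - 1 by omega)
      rw [bdb_sum_two _ a ⟨(a : ℕ) - 1, hlt⟩ hne ?_]
      · simp only [Fin.val_mk]
        split_ifs <;> first | (exfalso; omega) | tauto |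
          linear_combination (bdbCp q φ ((a : ℕ) - 1)) ^ 2 * Real.sin_sq_add_cos_sq (θ a) +
          (bdbSp q φ ((a : ℕ) - 1)) ^ 2 *
            Real.sin_sq_add_cos_sq (θ ⟨(a : ℕ) - 1, hlt⟩) +
          bdbCpSp q φ ((a : ℕ) - 1)
      · intro i hi hi'
        have hv : (i : ℕ) ≠ (a : ℕ) := fun h => hi (Fin.ext h)
        have hv' : (i : ℕ) ≠ (a : ℕ) - 1 := fun h => hi' (Fin.ext h)
        split_ifs <;> first | ring1 | (exfalso; omega) | tauto
  · rw [if_neg hab]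
    refine Finset.sum_eq_zero fun i _ => ?_
    have hv : (a : ℕ) ≠ (b : ℕ) := fun h => hab (Fin.ext h)
    split_ifs <;> first | ring1 | (exfalso; omega) | tauto

lemma bdb_col2 (q : ℕ) (θ : Fin q → ℝ) (φ : Fin (q - 1) → ℝ) (a b : Fin q) :
    (∑ i, (bdbB12 q θ φ i a * bdbB12 q θ φ i b + bdbB22 q θ φ i a * bdbB22 q θ φ i b)) =
      if a = b then 1 else 0 := by
  simp only [bdbB12_eq, bdbB22_eq]
  rcases eq_or_ne a b with rfl | hab
  · rw [if_pos rfl]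
    rcases Nat.lt_or_ge ((a : ℕ) + 1) q with h0 | h0
    · have hne : a ≠ (⟨(a : ℕ) + 1, h0⟩ : Fin q) :=
        Fin.ne_of_val_ne (show (a : ℕ) ≠ (a : ℕ) + 1 by omega)
      rw [bdb_sum_two _ a ⟨(a : ℕ) + 1, h0⟩ hne ?_]
      · simp only [Fin.val_mk]
        split_ifs <;> first | (exfalso; omega) | tauto |
          linear_combination (bdbCp q φ (a : ℕ)) ^ 2 * Real.sin_sq_add_cos_sq (θ a) +
          (bdbSp q φ (a : ℕ)) ^ 2 *
            Real.sin_sq_add_cos_sq (θ ⟨(a : ℕ) + 1, h0⟩) +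
          bdbCpSp q φ (a : ℕ)
      · intro i hi hi'
        have hv : (i : ℕ) ≠ (a : ℕ) := fun h => hi (Fin.ext h)
        have hv' : (i : ℕ) ≠ (a : ℕ) + 1 := fun h => hi' (Fin.ext h)
        split_ifs <;> first | ring1 | (exfalso; omega) | tauto
    · have hc : bdbCp q φ (a : ℕ) = 1 := by
        unfold bdbCp; rw [dif_neg]; omega
      rw [bdb_sum_one _ a ?_]
      · rw [hc]
        split_ifs <;> first | (exfalso; omega) | tauto |
          linear_combination Real.sin_sq_add_cos_sq (θ a)
      · intro i hi
        have hv : (i : ℕ) ≠ (a : ℕ) := fun h => hi (Fin.ext h)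
        have hiq := i.isLt
        split_ifs <;> first | ring1 | (exfalso; omega) | tauto
  · rw [if_neg hab]
    refine Finset.sum_eq_zero fun i _ => ?_
    have hv : (a : ℕ) ≠ (b : ℕ) := fun h => hab (Fin.ext h)
    split_ifs <;> first | ring1 | (exfalso; omega) | tauto

lemma bdb_mixed (q : ℕ) (θ : Fin q → ℝ) (φ : Fin (q - 1) → ℝ) (a b : Fin q) :
    (∑ i, (bdbB11 q θ φ i a * bdbB12 q θ φ i b + bdbB21 q θ φ i a * bdbB22 q θ φ i b)) =
      0 := by
  simp only [bdbB11_eq, bdbB12_eq, bdbB21_eq, bdbB22_eq]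
  rcases eq_or_ne ((a : ℕ)) ((b : ℕ) + 1) with h | h
  · have hne : a ≠ b := Fin.ne_of_val_ne (by omega)
    rw [bdb_sum_two _ a b hne ?_]
    · simp only [h, Nat.add_sub_cancel]
      split_ifs <;> first | (exfalso; omega) | tauto |
        linear_combination (bdbCp q φ (b : ℕ) * bdbSp q φ (b : ℕ)) *
          Real.sin_sq_add_cos_sq (θ a) -
        (bdbCp q φ (b : ℕ) * bdbSp q φ (b : ℕ)) * Real.sin_sq_add_cos_sq (θ b)
    · intro i hi hi'
      have hv : (i : ℕ) ≠ (a : ℕ) := fun hh => hi (Fin.ext hh)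
      have hv' : (i : ℕ) ≠ (b : ℕ) := fun hh => hi' (Fin.ext hh)
      split_ifs <;> first | ring1 | (exfalso; omega) | tauto
  · refine Finset.sum_eq_zero fun i _ => ?_
    split_ifs <;> first | ring1 | (exfalso; omega) | tauto

lemma bdb_mixed' (q : ℕ) (θ : Fin q → ℝ) (φ : Fin (q - 1) → ℝ) (a b : Fin q) :
    (∑ i, (bdbB12 q θ φ i a * bdbB11 q θ φ i b + bdbB22 q θ φ i a * bdbB21 q θ φ i b)) =
      0 := by
  rw [← bdb_mixed q θ φ b a]
  exact Finset.sum_congr rfl fun i _ => by ring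

/-- Any matrix in bidiagonal block form is orthogonal. -/
theorem bdb_orthogonal (q : ℕ) (θ : Fin q → ℝ) (φ : Fin (q - 1) → ℝ)
    (hθ : ∀ i, θ i ∈ Set.Icc 0 (Real.pi / 2))
    (hφ : ∀ i, φ i ∈ Set.Icc 0 (Real.pi / 2)) :
    Matrix.fromBlocks (bdbB11 q θ φ) (bdbB12 q θ φ) (bdbB21 q θ φ) (bdbB22 q θ φ)
      ∈ Matrix.orthogonalGroup (Fin q ⊕ Fin q) ℝ := by
  rw [Matrix.mem_orthogonalGroup_iff']
  ext x y
  rw [Matrix.mul_apply]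
  simp only [Matrix.transpose_apply]
  rw [Fintype.sum_sum_type]
  cases x with
  | inl a =>
    cases y with
    | inl b =>
      simp only [Matrix.fromBlocks_apply₁₁, Matrix.fromBlocks_apply₂₁]
      rw [← Finset.sum_add_distrib, bdb_col1, Matrix.one_apply]
      by_cases h : a = b <;> simp [h]
    | inr b =>
      simp only [Matrix.fromBlocks_apply₁₁, Matrix.fromBlocks_apply₂₁,
        Matrix.fromBlocks_apply₁₂, Matrix.fromBlocks_apply₂₂]
      rw [← Finset.sum_add_distrib, bdb_mixed, Matrix.one_apply]
      simp
  | inr a =>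
    cases y with
    | inl b =>
      simp only [Matrix.fromBlocks_apply₁₁, Matrix.fromBlocks_apply₂₁,
        Matrix.fromBlocks_apply₁₂, Matrix.fromBlocks_apply₂₂]
      rw [← Finset.sum_add_distrib, bdb_mixed', Matrix.one_apply]
      simp
    | inr b =>
      simp only [Matrix.fromBlocks_apply₁₂, Matrix.fromBlocks_apply₂₂]
      rw [← Finset.sum_add_distrib, bdb_col2, Matrix.one_apply]
      by_cases h : a = b <;> simp [h]
end

section
/- Let q ≥ 1 and let B₁₁, B₁₂, B₂₁, B₂₂ be q-by-q real matrices such that the 2q-by-2q matrix [[B₁₁, B₁₂], [B₂₁, B₂₂]] is orthogonal, and suppose the blocks have the following zero/sign pattern: B₁₁ is upper bidiagonal with nonnegative diagonal entries and nonpositive superdiagonal entries; B₁₂ is lower bidiagonal with nonnegative diagonal and subdiagonal entries; B₂₁ is upper bidiagonal with nonpositive diagonal and superdiagonal entries; B₂₂ is lower bidiagonal with nonnegative diagonal entries and nonpositive subdiagonal entries. Then there exist θ = (θ₁, …, θ_q) ∈ [0, π/2]^q and φ = (φ₁, …, φ_{q−1}) ∈ [0, π/2]^{q−1} such that B_{ij}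 = B_{ij}(θ,φ) for i, j = 1, 2. -/
open Matrix

noncomputable def bdbZ (a bb c dd e ff g hh : ℕ → ℝ) : ℕ → ℝ × ℝ
  | 0 => (a 0, -(e 0))
  | n+1 =>
    let Z := bdbZ a bb c dd e ff g hh n
    let S := -(bb n * Z.2 + ff n * Z.1)
    let C := c n * Z.2 + g n * Z.1
    (C * a (n+1) + S * dd (n+1), -(C * e (n+1) + S * hh (n+1)))

noncomputable def bdbS (a bb c dd e ff g hh : ℕ → ℝ) (n : ℕ) : ℝ :=
  -(bb n * (bdbZ a bb c dd e ff g hh n).2 + ff n * (bdbZ a bb c dd e ff g hh n).1)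

noncomputable def bdbC (a bb c dd e ff g hh : ℕ → ℝ) (n : ℕ) : ℝ :=
  c n * (bdbZ a bb c dd e ff g hh n).2 + g n * (bdbZ a bb c dd e ff g hh n).1

theorem bdbZ_succ (a bb c dd e ff g hh : ℕ → ℝ) (n : ℕ) :
    bdbZ a bb c dd e ff g hh (n+1) =
      (bdbC a bb c dd e ff g hh n * a (n+1) + bdbS a bb c dd e ff g hh n * dd (n+1),
       -(bdbC a bb c dd e ff g hh n * e (n+1) + bdbS a bb c dd e ff g hh n * hh (n+1))) := rfl


theorem bdb_sqeq {u v : ℝ} (hu : 0 ≤ u) (hv : 0 ≤ v) (h : u * u = v * v) : u = v := by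
  rw [← Real.sqrt_mul_self hu, h, Real.sqrt_mul_self hv]

theorem bdb_phi (x y Cp Sp an bn cn en fn gn dn hn S C : ℝ)
    (hx : 0 ≤ x) (hy : 0 ≤ y) (hxy : x*x + y*y = 1)
    (ha : an = x * Cp) (he : en = -(y * Cp)) (hd : dn = x * Sp) (hh : hn = -(y * Sp))
    (hCS : Cp*Cp + Sp*Sp = 1)
    (hbn : bn ≤ 0) (hfn : fn ≤ 0) (hcn : 0 ≤ cn) (hgn : 0 ≤ gn)
    (i1 : an*an + bn*bn + (cn*cn + dn*dn) = 1)
    (i2 : en*en + fn*fn + (gn*gn + hn*hn) = 1)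
    (i3 : an*en + bn*fn + (cn*gn + dn*hn) = 0)
    (i6 : an*bn + en*fn = 0)
    (i7 : dn*bn + hn*fn = 0)
    (i8 : an*cn + en*gn = 0)
    (i9 : dn*cn + hn*gn = 0)
    (hS : S = -(bn*y + fn*x)) (hC : C = cn*y + gn*x) :
    0 ≤ S ∧ 0 ≤ C ∧ S*S + C*C = 1 ∧ bn = -(S*y) ∧ fn = -(S*x) ∧ cn = C*y ∧ gn = C*x := by
  subst ha he hd hh hS hC
  have P1 : x*bn - y*fn = 0 := by linear_combination Cp*i6 + Sp*i7 - (x*bn - y*fn)*hCS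
  have P2 : x*cn - y*gn = 0 := by linear_combination Cp*i8 + Sp*i9 - (x*cn - y*gn)*hCS
  have P3 : bn*bn + cn*cn = y*y := by linear_combination i1 - x*x*hCS - hxy
  have P4 : fn*fn + gn*gn = x*x := by linear_combination i2 - y*y*hCS - hxy
  have P5 : bn*fn + cn*gn = x*y := by linear_combination i3 + x*y*hCS
  refine ⟨?_, ?_, ?_, ?_, ?_, ?_, ?_⟩
  · nlinarith [mul_nonneg hy (neg_nonneg.2 hbn), mul_nonneg hx (neg_nonneg.2 hfn)]
  · nlinarith [mul_nonneg hcn hy, mul_nonneg hgn hx]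
  · linear_combination y*y*P3 + x*x*P4 + 2*x*y*P5 + (x*x+y*y+1)*hxy
  · linear_combination x*P1 - bn*hxy
  · linear_combination -y*P1 - fn*hxy
  · linear_combination x*P2 - cn*hxy
  · linear_combination -y*P2 - gn*hxy

theorem bdb_step (x y S C a' e' d' h' x' y' bn fn cn gn : ℝ)
    (hx : 0 ≤ x) (hy : 0 ≤ y) (hxy : x*x + y*y = 1)
    (hS : 0 ≤ S) (hC : 0 ≤ C) (hSC : S*S + C*C = 1)
    (hb : bn = -(S*y)) (hf : fn = -(S*x)) (hc : cn = C*y) (hg : gn = C*x)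
    (ha' : 0 ≤ a') (hd' : 0 ≤ d') (he' : e' ≤ 0) (hh' : h' ≤ 0)
    (i10 : bn*a' + cn*d' = 0)
    (i11 : a'*fn + d'*gn = 0)
    (i12 : bn*e' + cn*h' = 0)
    (i13 : fn*e' + gn*h' = 0)
    (i4 : bn*bn + fn*fn + (a'*a' + e'*e') = 1)
    (i5 : cn*cn + d'*d' + (gn*gn + h'*h') = 1)
    (i14 : bn*cn + a'*d' + (fn*gn + e'*h') = 0)
    (hx' : x' = C*a' + S*d') (hy' : y' = -(C*e' + S*h')) :
    0 ≤ x' ∧ 0 ≤ y' ∧ x'*x' + y'*y' = 1 ∧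
    a' = x'*C ∧ e' = -(y'*C) ∧ d' = x'*S ∧ h' = -(y'*S) := by
  subst hb hf hc hg hx' hy'
  have Q1 : C*d' - S*a' = 0 := by linear_combination y*i10 + x*i11 - (C*d' - S*a')*hxy
  have Q2 : C*h' - S*e' = 0 := by linear_combination y*i12 + x*i13 - (C*h' - S*e')*hxy
  have Q3 : a'*a' + e'*e' = C*C := by linear_combination i4 - S*S*hxy - hSC
  have Q4 : d'*d' + h'*h' = S*S := by linear_combination i5 - C*C*hxy - hSC
  have Q5 : a'*d' + e'*h' = S*C := by linear_combination i14 + S*C*hxy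
  refine ⟨?_, ?_, ?_, ?_, ?_, ?_, ?_⟩
  · nlinarith [mul_nonneg hC ha', mul_nonneg hS hd']
  · nlinarith [mul_nonneg hC (neg_nonneg.2 he'), mul_nonneg hS (neg_nonneg.2 hh')]
  · linear_combination C*C*Q3 + S*S*Q4 + 2*S*C*Q5 + (S*S+C*C+1)*hSC
  · linear_combination -S*Q1 - a'*hSC
  · linear_combination -S*Q2 - e'*hSC
  · linear_combination C*Q1 - d'*hSC
  · linear_combination C*Q2 - h'*hSC
theorem bdb_sum_single {N n : ℕ} (f : ℕ → ℝ) (hn : n < N)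
    (h : ∀ k, k < N → k ≠ n → f k = 0) : ∑ k ∈ Finset.range N, f k = f n :=
  Finset.sum_eq_single_of_mem n (Finset.mem_range.2 hn)
    (fun b hb hbn => h b (Finset.mem_range.1 hb) hbn)

theorem bdb_sum_pair {N n m : ℕ} (f : ℕ → ℝ) (hn : n < N) (hm0 : ¬ m < N → f m = 0)
    (hnm : n ≠ m) (h : ∀ k, k < N → k ≠ n → k ≠ m → f k = 0) :
    ∑ k ∈ Finset.range N, f k = f n + f m := by
  by_cases hm : m < N
  · rw [← Finset.sum_pair hnm]
    refine (Finset.sum_subset ?_ ?_).symm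
    · intro x hx
      simp only [Finset.mem_insert, Finset.mem_singleton] at hx
      rcases hx with rfl | rfl <;> exact Finset.mem_range.2 (by omega)
    · intro x hx hx2
      simp only [Finset.mem_insert, Finset.mem_singleton, not_or] at hx2
      exact h x (Finset.mem_range.1 hx) hx2.1 hx2.2
  · rw [bdb_sum_single f hn (fun k hk hkn => h k hk hkn (by omega)), hm0 hm, add_zero]

theorem bdb_sum_lower {N n : ℕ} (f : ℕ → ℝ) (hn : n < N)
    (h : ∀ k, k < N → k ≠ n → n ≠ k + 1 → f k = 0) :
    ∑ k ∈ Finset.range N, f k = f n + (if n = 0 then 0 else f (n - 1)) := by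
  rcases n with _ | m
  · rw [if_pos rfl, add_zero]
    exact bdb_sum_single f hn (fun k hk hkn => h k hk hkn (by omega))
  · rw [if_neg (by omega)]
    exact bdb_sum_pair f hn (fun hm => absurd (by omega : m < N) hm) (by omega)
      (fun k hk h1 h2 => h k hk h1 (by omega))

set_option maxHeartbeats 2000000 in
/-- Any orthogonal matrix with the bidiagonal structure and sign pattern of
bidiagonal block form is expressible in terms of some `θ` and `φ`. -/
theorem bdb_of_sign_pattern (q : ℕ) (hq : 1 ≤ q)
    (B₁₁ B₁₂ B₂₁ B₂₂ : Matrix (Fin q) (Fin q) ℝ)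
    (horth : Matrix.fromBlocks B₁₁ B₁₂ B₂₁ B₂₂ ∈ Matrix.orthogonalGroup (Fin q ⊕ Fin q) ℝ)
    -- B₁₁ upper bidiagonal, nonnegative diagonal, nonpositive superdiagonal
    (h11z : ∀ i j : Fin q, ¬(j.val = i.val ∨ j.val = i.val + 1) → B₁₁ i j = 0)
    (h11d : ∀ i : Fin q, 0 ≤ B₁₁ i i)
    (h11s : ∀ i j : Fin q, j.val = i.val + 1 → B₁₁ i j ≤ 0)
    -- B₁₂ lower bidiagonal, nonnegative diagonal and subdiagonal
    (h12z : ∀ i j : Fin q, ¬(j.val = i.val ∨ i.val = j.val + 1) → B₁₂ i j = 0)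
    (h12d : ∀ i : Fin q, 0 ≤ B₁₂ i i)
    (h12s : ∀ i j : Fin q, i.val = j.val + 1 → 0 ≤ B₁₂ i j)
    -- B₂₁ upper bidiagonal, nonpositive diagonal and superdiagonal
    (h21z : ∀ i j : Fin q, ¬(j.val = i.val ∨ j.val = i.val + 1) → B₂₁ i j = 0)
    (h21d : ∀ i : Fin q, B₂₁ i i ≤ 0)
    (h21s : ∀ i j : Fin q, j.val = i.val + 1 → B₂₁ i j ≤ 0)
    -- B₂₂ lower bidiagonal, nonnegative diagonal, nonpositive subdiagonal
    (h22z : ∀ i j : Fin q, ¬(j.val = i.val ∨ i.val = j.val + 1) → B₂₂ i j = 0)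
    (h22d : ∀ i : Fin q, 0 ≤ B₂₂ i i)
    (h22s : ∀ i j : Fin q, i.val = j.val + 1 → B₂₂ i j ≤ 0) :
    ∃ (θ : Fin q → ℝ) (φ : Fin (q - 1) → ℝ),
      (∀ i, θ i ∈ Set.Icc 0 (Real.pi / 2)) ∧
      (∀ i, φ i ∈ Set.Icc 0 (Real.pi / 2)) ∧
      B₁₁ = bdbB11 q θ φ ∧ B₁₂ = bdbB12 q θ φ ∧
      B₂₁ = bdbB21 q θ φ ∧ B₂₂ = bdbB22 q θ φ := by

  set M := Matrix.fromBlocks B₁₁ B₁₂ B₂₁ B₂₂ with hMdef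
  have hM1 : M * Mᵀ = 1 := by
    have := (Matrix.mem_orthogonalGroup_iff (Fin q ⊕ Fin q) ℝ).1 horth
    simpa [Matrix.star_eq_conjTranspose, Matrix.conjTranspose] using this
  have hM2 : Mᵀ * M = 1 := by
    have := (Matrix.mem_orthogonalGroup_iff' (Fin q ⊕ Fin q) ℝ).1 horth
    simpa [Matrix.star_eq_conjTranspose, Matrix.conjTranspose] using this
  have hrow : ∀ x y, (∑ k, M x k * M y k) = if x = y then (1:ℝ) else 0 := by
    intro x y
    have := congrFun (congrFun hM1 x) y
    simpa [Matrix.mul_apply, Matrix.one_apply] using this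
  have hcol : ∀ x y, (∑ k, M k x * M k y) = if x = y then (1:ℝ) else 0 := by
    intro x y
    have := congrFun (congrFun hM2 x) y
    simpa [Matrix.mul_apply, Matrix.one_apply, mul_comm] using this
  set A11 : ℕ → ℕ → ℝ := fun i j => if h : i < q ∧ j < q then B₁₁ ⟨i, h.1⟩ ⟨j, h.2⟩ else 0 with hA11
  set A12 : ℕ → ℕ → ℝ := fun i j => if h : i < q ∧ j < q then B₁₂ ⟨i, h.1⟩ ⟨j, h.2⟩ else 0 with hA12
  set A21 : ℕ → ℕ → ℝ := fun i j => if h : i < q ∧ j < q then B₂₁ ⟨i, h.1⟩ ⟨j, h.2⟩ else 0 with hA21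
  set A22 : ℕ → ℕ → ℝ := fun i j => if h : i < q ∧ j < q then B₂₂ ⟨i, h.1⟩ ⟨j, h.2⟩ else 0 with hA22
  have eB11 : ∀ x y : Fin q, B₁₁ x y = A11 x.1 y.1 := by
    intro x y; rw [hA11]; simp [x.isLt, y.isLt]
  have eB12 : ∀ x y : Fin q, B₁₂ x y = A12 x.1 y.1 := by
    intro x y; rw [hA12]; simp [x.isLt, y.isLt]
  have eB21 : ∀ x y : Fin q, B₂₁ x y = A21 x.1 y.1 := by
    intro x y; rw [hA21]; simp [x.isLt, y.isLt]
  have eB22 : ∀ x y : Fin q, B₂₂ x y = A22 x.1 y.1 := by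
    intro x y; rw [hA22]; simp [x.isLt, y.isLt]
  have sum_conv : ∀ (F : Fin q → ℝ) (G : ℕ → ℝ), (∀ k : Fin q, F k = G k.1) →
      ∑ k : Fin q, F k = ∑ k ∈ Finset.range q, G k := by
    intro F G hFG
    rw [Finset.sum_congr rfl (fun k _ => hFG k)]
    exact Fin.sum_univ_eq_sum_range G q
  -- block-level orthogonality, ℕ-indexed
  have hTT : ∀ i j : ℕ, (hi : i < q) → (hj : j < q) →
      (∑ k ∈ Finset.range q, A11 i k * A11 j k) + (∑ k ∈ Finset.range q, A12 i k * A12 j k)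
        = if i = j then 1 else 0 := by
    intro i j hi hj
    have h := hrow (Sum.inl ⟨i, hi⟩) (Sum.inl ⟨j, hj⟩)
    rw [Fintype.sum_sum_type] at h
    simp only [hMdef, Matrix.fromBlocks_apply₁₁, Matrix.fromBlocks_apply₁₂] at h
    rw [sum_conv _ (fun k => A11 i k * A11 j k) (fun k => by rw [eB11, eB11]),
        sum_conv _ (fun k => A12 i k * A12 j k) (fun k => by rw [eB12, eB12])] at h
    rw [h]
    simp [Fin.ext_iff]
  have hTB : ∀ i j : ℕ, (hi : i < q) → (hj : j < q) →
      (∑ k ∈ Finset.range q, A11 i k * A21 j k) + (∑ k ∈ Finset.range q, A12 i k * A22 j k)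
        = 0 := by
    intro i j hi hj
    have h := hrow (Sum.inl ⟨i, hi⟩) (Sum.inr ⟨j, hj⟩)
    rw [Fintype.sum_sum_type] at h
    simp only [hMdef, Matrix.fromBlocks_apply₁₁, Matrix.fromBlocks_apply₁₂,
      Matrix.fromBlocks_apply₂₁, Matrix.fromBlocks_apply₂₂] at h
    rw [sum_conv _ (fun k => A11 i k * A21 j k) (fun k => by rw [eB11, eB21]),
        sum_conv _ (fun k => A12 i k * A22 j k) (fun k => by rw [eB12, eB22])] at h
    rw [h]; simp
  have hBB : ∀ i j : ℕ, (hi : i < q) → (hj : j < q) →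
      (∑ k ∈ Finset.range q, A21 i k * A21 j k) + (∑ k ∈ Finset.range q, A22 i k * A22 j k)
        = if i = j then 1 else 0 := by
    intro i j hi hj
    have h := hrow (Sum.inr ⟨i, hi⟩) (Sum.inr ⟨j, hj⟩)
    rw [Fintype.sum_sum_type] at h
    simp only [hMdef, Matrix.fromBlocks_apply₂₁, Matrix.fromBlocks_apply₂₂] at h
    rw [sum_conv _ (fun k => A21 i k * A21 j k) (fun k => by rw [eB21, eB21]),
        sum_conv _ (fun k => A22 i k * A22 j k) (fun k => by rw [eB22, eB22])] at h
    rw [h]; simp [Fin.ext_iff]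
  have hLL : ∀ i j : ℕ, (hi : i < q) → (hj : j < q) →
      (∑ k ∈ Finset.range q, A11 k i * A11 k j) + (∑ k ∈ Finset.range q, A21 k i * A21 k j)
        = if i = j then 1 else 0 := by
    intro i j hi hj
    have h := hcol (Sum.inl ⟨i, hi⟩) (Sum.inl ⟨j, hj⟩)
    rw [Fintype.sum_sum_type] at h
    simp only [hMdef, Matrix.fromBlocks_apply₁₁, Matrix.fromBlocks_apply₂₁] at h
    rw [sum_conv _ (fun k => A11 k i * A11 k j) (fun k => by rw [eB11, eB11]),
        sum_conv _ (fun k => A21 k i * A21 k j) (fun k => by rw [eB21, eB21])] at h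
    rw [h]; simp [Fin.ext_iff]
  have hLR : ∀ i j : ℕ, (hi : i < q) → (hj : j < q) →
      (∑ k ∈ Finset.range q, A11 k i * A12 k j) + (∑ k ∈ Finset.range q, A21 k i * A22 k j)
        = 0 := by
    intro i j hi hj
    have h := hcol (Sum.inl ⟨i, hi⟩) (Sum.inr ⟨j, hj⟩)
    rw [Fintype.sum_sum_type] at h
    simp only [hMdef, Matrix.fromBlocks_apply₁₁, Matrix.fromBlocks_apply₂₁,
      Matrix.fromBlocks_apply₁₂, Matrix.fromBlocks_apply₂₂] at h
    rw [sum_conv _ (fun k => A11 k i * A12 k j) (fun k => by rw [eB11, eB12]),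
        sum_conv _ (fun k => A21 k i * A22 k j) (fun k => by rw [eB21, eB22])] at h
    rw [h]; simp
  have hRR : ∀ i j : ℕ, (hi : i < q) → (hj : j < q) →
      (∑ k ∈ Finset.range q, A12 k i * A12 k j) + (∑ k ∈ Finset.range q, A22 k i * A22 k j)
        = if i = j then 1 else 0 := by
    intro i j hi hj
    have h := hcol (Sum.inr ⟨i, hi⟩) (Sum.inr ⟨j, hj⟩)
    rw [Fintype.sum_sum_type] at h
    simp only [hMdef, Matrix.fromBlocks_apply₁₂, Matrix.fromBlocks_apply₂₂] at h
    rw [sum_conv _ (fun k => A12 k i * A12 k j) (fun k => by rw [eB12, eB12]),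
        sum_conv _ (fun k => A22 k i * A22 k j) (fun k => by rw [eB22, eB22])] at h
    rw [h]; simp [Fin.ext_iff]
  -- zero lemmas at ℕ level
  have z11 : ∀ i j : ℕ, ¬(j = i ∨ j = i + 1) → A11 i j = 0 := by
    intro i j hij; simp only [hA11]; split
    · exact h11z _ _ (by simpa using hij)
    · rfl
  have z21 : ∀ i j : ℕ, ¬(j = i ∨ j = i + 1) → A21 i j = 0 := by
    intro i j hij; simp only [hA21]; split
    · exact h21z _ _ (by simpa using hij)
    · rfl
  have z12 : ∀ i j : ℕ, ¬(j = i ∨ i = j + 1) → A12 i j = 0 := by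
    intro i j hij; simp only [hA12]; split
    · exact h12z _ _ (by simpa using hij)
    · rfl
  have z22 : ∀ i j : ℕ, ¬(j = i ∨ i = j + 1) → A22 i j = 0 := by
    intro i j hij; simp only [hA22]; split
    · exact h22z _ _ (by simpa using hij)
    · rfl
  have o11 : ∀ i j : ℕ, ¬(i < q ∧ j < q) → A11 i j = 0 := by
    intro i j hij; simp only [hA11]; rw [dif_neg hij]
  have o12 : ∀ i j : ℕ, ¬(i < q ∧ j < q) → A12 i j = 0 := by
    intro i j hij; simp only [hA12]; rw [dif_neg hij]
  have o21 : ∀ i j : ℕ, ¬(i < q ∧ j < q) → A21 i j = 0 := by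
    intro i j hij; simp only [hA21]; rw [dif_neg hij]
  have o22 : ∀ i j : ℕ, ¬(i < q ∧ j < q) → A22 i j = 0 := by
    intro i j hij; simp only [hA22]; rw [dif_neg hij]
  -- sign lemmas
  have sa : ∀ n : ℕ, 0 ≤ A11 n n := by
    intro n; simp only [hA11]; split
    · exact h11d _
    · exact le_rfl
  have sbb : ∀ n : ℕ, A11 n (n+1) ≤ 0 := by
    intro n; simp only [hA11]; split
    · exact h11s _ _ rfl
    · exact le_rfl
  have sc : ∀ n : ℕ, 0 ≤ A12 n n := by
    intro n; simp only [hA12]; split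
    · exact h12d _
    · exact le_rfl
  have sdd : ∀ n : ℕ, 0 ≤ A12 (n+1) n := by
    intro n; simp only [hA12]; split
    · exact h12s _ _ rfl
    · exact le_rfl
  have se : ∀ n : ℕ, A21 n n ≤ 0 := by
    intro n; simp only [hA21]; split
    · exact h21d _
    · exact le_rfl
  have sff : ∀ n : ℕ, A21 n (n+1) ≤ 0 := by
    intro n; simp only [hA21]; split
    · exact h21s _ _ rfl
    · exact le_rfl
  have sg : ∀ n : ℕ, 0 ≤ A22 n n := by
    intro n; simp only [hA22]; split
    · exact h22d _
    · exact le_rfl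
  have shh : ∀ n : ℕ, A22 (n+1) n ≤ 0 := by
    intro n; simp only [hA22]; split
    · exact h22s _ _ rfl
    · exact le_rfl
  -- sequences
  set a : ℕ → ℝ := fun n => A11 n n with ha
  set bb : ℕ → ℝ := fun n => A11 n (n+1) with hbb
  set c : ℕ → ℝ := fun n => A12 n n with hc
  set dd : ℕ → ℝ := fun n => if n = 0 then 0 else A12 n (n-1) with hdd
  set e : ℕ → ℝ := fun n => A21 n n with he
  set ff : ℕ → ℝ := fun n => A21 n (n+1) with hff
  set g : ℕ → ℝ := fun n => A22 n n with hg
  set hw : ℕ → ℝ := fun n => if n = 0 then 0 else A22 n (n-1) with hhw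
  have dds : ∀ n : ℕ, dd (n+1) = A12 (n+1) n := by intro n; simp [hdd]
  have hws : ∀ n : ℕ, hw (n+1) = A22 (n+1) n := by intro n; simp [hhw]
  have dd0 : dd 0 = 0 := by simp [hdd]
  have hw0 : hw 0 = 0 := by simp [hhw]
  -- I1 : row of (B11 B12), squared norm
  have I1 : ∀ n : ℕ, n < q → a n * a n + bb n * bb n + (c n * c n + dd n * dd n) = 1 := by
    intro n hn
    have h := hTT n n hn hn
    rw [if_pos rfl] at h
    rw [bdb_sum_pair (n := n) (m := n+1) (fun k => A11 n k * A11 n k) hn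
        (fun hm => by simp only [o11 n (n+1) (by omega), zero_mul, mul_zero]) (by omega)
        (fun k hk k1 k2 => by simp only [z11 n k (by omega), zero_mul, mul_zero]),
      bdb_sum_lower (fun k => A12 n k * A12 n k) hn
        (fun k hk k1 k2 => by simp only [z12 n k (by omega), zero_mul, mul_zero])] at h
    have hdd2 : (if n = 0 then (0:ℝ) else A12 n (n-1) * A12 n (n-1)) = dd n * dd n := by
      simp only [hdd]; split <;> ring
    rw [hdd2] at h
    linarith [h]
  have I2 : ∀ n : ℕ, n < q → e n * e n + ff n * ff n + (g n * g n + hw n * hw n) = 1 := by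
    intro n hn
    have h := hBB n n hn hn
    rw [if_pos rfl] at h
    rw [bdb_sum_pair (n := n) (m := n+1) (fun k => A21 n k * A21 n k) hn
        (fun hm => by simp only [o21 n (n+1) (by omega), zero_mul, mul_zero]) (by omega)
        (fun k hk k1 k2 => by simp only [z21 n k (by omega), zero_mul, mul_zero]),
      bdb_sum_lower (fun k => A22 n k * A22 n k) hn
        (fun k hk k1 k2 => by simp only [z22 n k (by omega), zero_mul, mul_zero])] at h
    have hw2 : (if n = 0 then (0:ℝ) else A22 n (n-1) * A22 n (n-1)) = hw n * hw n := by
      simp only [hhw]; split <;> ring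
    rw [hw2] at h
    linarith [h]
  have I3 : ∀ n : ℕ, n < q → a n * e n + bb n * ff n + (c n * g n + dd n * hw n) = 0 := by
    intro n hn
    have h := hTB n n hn hn
    rw [bdb_sum_pair (n := n) (m := n+1) (fun k => A11 n k * A21 n k) hn
        (fun hm => by simp only [o11 n (n+1) (by omega), zero_mul, mul_zero]) (by omega)
        (fun k hk k1 k2 => by simp only [z11 n k (by omega), zero_mul, mul_zero]),
      bdb_sum_lower (fun k => A12 n k * A22 n k) hn
        (fun k hk k1 k2 => by simp only [z12 n k (by omega), zero_mul, mul_zero])] at h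
    have hdw : (if n = 0 then (0:ℝ) else A12 n (n-1) * A22 n (n-1)) = dd n * hw n := by
      simp only [hdd, hhw]; split <;> ring
    rw [hdw] at h
    linarith [h]
  have I40 : a 0 * a 0 + e 0 * e 0 = 1 := by
    have h := hLL 0 0 hq hq
    rw [if_pos rfl] at h
    rw [bdb_sum_single (fun k => A11 k 0 * A11 k 0) hq
        (fun k hk k1 => by simp only [z11 k 0 (by omega), zero_mul, mul_zero]),
      bdb_sum_single (fun k => A21 k 0 * A21 k 0) hq
        (fun k hk k1 => by simp only [z21 k 0 (by omega), zero_mul, mul_zero])] at h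
    linarith [h]
  have I4 : ∀ n : ℕ, n + 1 < q →
      bb n * bb n + ff n * ff n + (a (n+1) * a (n+1) + e (n+1) * e (n+1)) = 1 := by
    intro n hn
    have h := hLL (n+1) (n+1) hn hn
    rw [if_pos rfl] at h
    rw [bdb_sum_pair (n := n) (m := n+1) (fun k => A11 k (n+1) * A11 k (n+1)) (by omega)
        (fun hm => absurd hn hm) (by omega)
        (fun k hk k1 k2 => by simp only [z11 k (n+1) (by omega), zero_mul, mul_zero]),
      bdb_sum_pair (n := n) (m := n+1) (fun k => A21 k (n+1) * A21 k (n+1)) (by omega)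
        (fun hm => absurd hn hm) (by omega)
        (fun k hk k1 k2 => by simp only [z21 k (n+1) (by omega), zero_mul, mul_zero])] at h
    linarith [h]
  have I5 : ∀ n : ℕ, n < q →
      c n * c n + dd (n+1) * dd (n+1) + (g n * g n + hw (n+1) * hw (n+1)) = 1 := by
    intro n hn
    have h := hRR n n hn hn
    rw [if_pos rfl] at h
    rw [bdb_sum_pair (n := n) (m := n+1) (fun k => A12 k n * A12 k n) hn
        (fun hm => by simp only [o12 (n+1) n (by omega), zero_mul, mul_zero]) (by omega)
        (fun k hk k1 k2 => by simp only [z12 k n (by omega), zero_mul, mul_zero]),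
      bdb_sum_pair (n := n) (m := n+1) (fun k => A22 k n * A22 k n) hn
        (fun hm => by simp only [o22 (n+1) n (by omega), zero_mul, mul_zero]) (by omega)
        (fun k hk k1 k2 => by simp only [z22 k n (by omega), zero_mul, mul_zero])] at h
    rw [dds, hws]
    linarith [h]
  have I6 : ∀ n : ℕ, n + 1 < q → a n * bb n + e n * ff n = 0 := by
    intro n hn
    have h := hLL n (n+1) (by omega) hn
    rw [if_neg (by omega)] at h
    rw [bdb_sum_single (fun k => A11 k n * A11 k (n+1)) (by omega : n < q)
        (fun k hk k1 => by
          by_cases h1 : n = k + 1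
          · simp only [z11 k (n+1) (by omega), zero_mul, mul_zero]
          · simp only [z11 k n (by omega), zero_mul, mul_zero]),
      bdb_sum_single (fun k => A21 k n * A21 k (n+1)) (by omega : n < q)
        (fun k hk k1 => by
          by_cases h1 : n = k + 1
          · simp only [z21 k (n+1) (by omega), zero_mul, mul_zero]
          · simp only [z21 k n (by omega), zero_mul, mul_zero])] at h
    linarith [h]
  have I7 : ∀ m : ℕ, m + 2 < q →
      bb (m+1) * dd (m+1) + ff (m+1) * hw (m+1) = 0 := by
    intro m hm
    have h := hLR (m+2) m (by omega) (by omega)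
    rw [bdb_sum_single (fun k => A11 k (m+2) * A12 k m) (by omega : m + 1 < q)
        (fun k hk k1 => by
          by_cases h1 : k = m + 2
          · simp only [z12 k m (by omega), zero_mul, mul_zero]
          · simp only [z11 k (m+2) (by omega), zero_mul, mul_zero]),
      bdb_sum_single (fun k => A21 k (m+2) * A22 k m) (by omega : m + 1 < q)
        (fun k hk k1 => by
          by_cases h1 : k = m + 2
          · simp only [z22 k m (by omega), zero_mul, mul_zero]
          · simp only [z21 k (m+2) (by omega), zero_mul, mul_zero])] at h
    rw [dds, hws]
    linarith [h]
  have I8 : ∀ n : ℕ, n < q → a n * c n + e n * g n = 0 := by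
    intro n hn
    have h := hLR n n hn hn
    rw [bdb_sum_single (fun k => A11 k n * A12 k n) hn
        (fun k hk k1 => by
          by_cases h1 : n = k + 1
          · simp only [z12 k n (by omega), zero_mul, mul_zero]
          · simp only [z11 k n (by omega), zero_mul, mul_zero]),
      bdb_sum_single (fun k => A21 k n * A22 k n) hn
        (fun k hk k1 => by
          by_cases h1 : n = k + 1
          · simp only [z22 k n (by omega), zero_mul, mul_zero]
          · simp only [z21 k n (by omega), zero_mul, mul_zero])] at h
    linarith [h]
  have I9 : ∀ m : ℕ, m + 1 < q →
      dd (m+1) * c (m+1) + hw (m+1) * g (m+1) = 0 := by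
    intro m hm
    have h := hRR m (m+1) (by omega) hm
    rw [if_neg (by omega)] at h
    rw [bdb_sum_single (fun k => A12 k m * A12 k (m+1)) hm
        (fun k hk k1 => by
          by_cases h1 : k = m
          · simp only [z12 k (m+1) (by omega), zero_mul, mul_zero]
          · simp only [z12 k m (by omega), zero_mul, mul_zero]),
      bdb_sum_single (fun k => A22 k m * A22 k (m+1)) hm
        (fun k hk k1 => by
          by_cases h1 : k = m
          · simp only [z22 k (m+1) (by omega), zero_mul, mul_zero]
          · simp only [z22 k m (by omega), zero_mul, mul_zero])] at h
    rw [dds, hws]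
    linarith [h]
  have I10 : ∀ n : ℕ, n + 1 < q → bb n * a (n+1) + c n * dd (n+1) = 0 := by
    intro n hn
    have h := hTT n (n+1) (by omega) hn
    rw [if_neg (by omega)] at h
    rw [bdb_sum_single (fun k => A11 n k * A11 (n+1) k) hn
        (fun k hk k1 => by
          by_cases h1 : k = n
          · simp only [z11 (n+1) k (by omega), zero_mul, mul_zero]
          · simp only [z11 n k (by omega), zero_mul, mul_zero]),
      bdb_sum_single (fun k => A12 n k * A12 (n+1) k) (by omega : n < q)
        (fun k hk k1 => by
          by_cases h1 : n = k + 1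
          · simp only [z12 (n+1) k (by omega), zero_mul, mul_zero]
          · simp only [z12 n k (by omega), zero_mul, mul_zero])] at h
    rw [dds]
    linarith [h]
  have I11 : ∀ n : ℕ, n + 1 < q → a (n+1) * ff n + dd (n+1) * g n = 0 := by
    intro n hn
    have h := hTB (n+1) n hn (by omega)
    rw [bdb_sum_single (fun k => A11 (n+1) k * A21 n k) hn
        (fun k hk k1 => by
          by_cases h1 : k = n + 2
          · simp only [z21 n k (by omega), zero_mul, mul_zero]
          · simp only [z11 (n+1) k (by omega), zero_mul, mul_zero]),
      bdb_sum_single (fun k => A12 (n+1) k * A22 n k) (by omega : n < q)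
        (fun k hk k1 => by
          by_cases h1 : k = n + 1
          · simp only [z22 n k (by omega), zero_mul, mul_zero]
          · simp only [z12 (n+1) k (by omega), zero_mul, mul_zero])] at h
    rw [dds]
    linarith [h]
  have I12 : ∀ n : ℕ, n + 1 < q → bb n * e (n+1) + c n * hw (n+1) = 0 := by
    intro n hn
    have h := hTB n (n+1) (by omega) hn
    rw [bdb_sum_single (fun k => A11 n k * A21 (n+1) k) hn
        (fun k hk k1 => by
          by_cases h1 : k = n
          · simp only [z21 (n+1) k (by omega), zero_mul, mul_zero]
          · simp only [z11 n k (by omega), zero_mul, mul_zero]),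
      bdb_sum_single (fun k => A12 n k * A22 (n+1) k) (by omega : n < q)
        (fun k hk k1 => by
          by_cases h1 : n = k + 1
          · simp only [z22 (n+1) k (by omega), zero_mul, mul_zero]
          · simp only [z12 n k (by omega), zero_mul, mul_zero])] at h
    rw [hws]
    linarith [h]
  have I13 : ∀ n : ℕ, n + 1 < q → ff n * e (n+1) + g n * hw (n+1) = 0 := by
    intro n hn
    have h := hBB n (n+1) (by omega) hn
    rw [if_neg (by omega)] at h
    rw [bdb_sum_single (fun k => A21 n k * A21 (n+1) k) hn
        (fun k hk k1 => by
          by_cases h1 : k = n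
          · simp only [z21 (n+1) k (by omega), zero_mul, mul_zero]
          · simp only [z21 n k (by omega), zero_mul, mul_zero]),
      bdb_sum_single (fun k => A22 n k * A22 (n+1) k) (by omega : n < q)
        (fun k hk k1 => by
          by_cases h1 : n = k + 1
          · simp only [z22 (n+1) k (by omega), zero_mul, mul_zero]
          · simp only [z22 n k (by omega), zero_mul, mul_zero])] at h
    rw [hws]
    linarith [h]
  have I14 : ∀ n : ℕ, n + 1 < q →
      bb n * c n + a (n+1) * dd (n+1) + (ff n * g n + e (n+1) * hw (n+1)) = 0 := by
    intro n hn
    have h := hLR (n+1) n hn (by omega)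
    rw [bdb_sum_pair (n := n) (m := n+1) (fun k => A11 k (n+1) * A12 k n) (by omega : n < q)
        (fun hm => absurd hn hm) (by omega)
        (fun k hk k1 k2 => by simp only [z11 k (n+1) (by omega), zero_mul, mul_zero]),
      bdb_sum_pair (n := n) (m := n+1) (fun k => A21 k (n+1) * A22 k n) (by omega : n < q)
        (fun hm => absurd hn hm) (by omega)
        (fun k hk k1 k2 => by simp only [z21 k (n+1) (by omega), zero_mul, mul_zero])] at h
    rw [dds, hws]
    linarith [h]
  -- recursive construction
  set Z : ℕ → ℝ × ℝ := bdbZ a bb c dd e ff g hw with hZ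
  set S : ℕ → ℝ := bdbS a bb c dd e ff g hw with hS
  set C : ℕ → ℝ := bdbC a bb c dd e ff g hw with hC
  set Cp : ℕ → ℝ := fun n => if n = 0 then 1 else C (n-1) with hCp
  set Sp : ℕ → ℝ := fun n => if n = 0 then 0 else S (n-1) with hSp
  have hSdef : ∀ n, S n = -(bb n * (Z n).2 + ff n * (Z n).1) := fun n => rfl
  have hCdef : ∀ n, C n = c n * (Z n).2 + g n * (Z n).1 := fun n => rfl
  have hZ0 : Z 0 = (a 0, -(e 0)) := rfl
  have hZs : ∀ n, Z (n+1) =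
      (C n * a (n+1) + S n * dd (n+1), -(C n * e (n+1) + S n * hw (n+1))) :=
    fun n => bdbZ_succ a bb c dd e ff g hw n
  have sa' : ∀ n, 0 ≤ a n := sa
  have sbb' : ∀ n, bb n ≤ 0 := sbb
  have sc' : ∀ n, 0 ≤ c n := sc
  have se' : ∀ n, e n ≤ 0 := se
  have sff' : ∀ n, ff n ≤ 0 := sff
  have sg' : ∀ n, 0 ≤ g n := sg
  have sdd' : ∀ n, 0 ≤ dd (n+1) := fun n => by rw [dds n]; exact sdd n
  have shh' : ∀ n, hw (n+1) ≤ 0 := fun n => by rw [hws n]; exact shh n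
  have hCp1 : ∀ n : ℕ, Cp (n+1) = C n := by intro n; simp [hCp]
  have hSp1 : ∀ n : ℕ, Sp (n+1) = S n := by intro n; simp [hSp]
  have phiAt : ∀ n, n < q → 0 ≤ (Z n).1 → 0 ≤ (Z n).2 →
      (Z n).1 * (Z n).1 + (Z n).2 * (Z n).2 = 1 →
      a n = (Z n).1 * Cp n → e n = -((Z n).2 * Cp n) →
      dd n = (Z n).1 * Sp n → hw n = -((Z n).2 * Sp n) →
      Cp n * Cp n + Sp n * Sp n = 1 →
      (if n + 1 < q then
         0 ≤ S n ∧ 0 ≤ C n ∧ S n * S n + C n * C n = 1 ∧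
         bb n = -(S n * (Z n).2) ∧ ff n = -(S n * (Z n).1) ∧
         c n = C n * (Z n).2 ∧ g n = C n * (Z n).1
       else c n = (Z n).2 ∧ g n = (Z n).1) := by
    intro n hn hx hy hxy haP heP hdP hhP hCS
    by_cases hn1 : n + 1 < q
    · rw [if_pos hn1]
      have e7 : dd n * bb n + hw n * ff n = 0 := by
        rcases Nat.eq_zero_or_pos n with rfl | hpos
        · rw [dd0, hw0]; ring
        · obtain ⟨m, rfl⟩ : ∃ m, n = m + 1 := ⟨n - 1, by omega⟩
          have := I7 m (by omega)
          linarith [this]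
      have e9 : dd n * c n + hw n * g n = 0 := by
        rcases Nat.eq_zero_or_pos n with rfl | hpos
        · rw [dd0, hw0]; ring
        · obtain ⟨m, rfl⟩ : ∃ m, n = m + 1 := ⟨n - 1, by omega⟩
          exact I9 m (by omega)
      exact bdb_phi (Z n).1 (Z n).2 (Cp n) (Sp n) (a n) (bb n) (c n) (e n) (ff n)
        (g n) (dd n) (hw n) (S n) (C n) hx hy hxy haP heP hdP hhP hCS
        (sbb' n) (sff' n) (sc' n) (sg' n) (I1 n hn) (I2 n hn) (I3 n hn)
        (I6 n hn1) e7 (I8 n hn) e9 (hSdef n) (hCdef n)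
    · rw [if_neg hn1]
      have hbb0 : bb n = 0 := o11 n (n+1) (by omega)
      have hff0 : ff n = 0 := o21 n (n+1) (by omega)
      have i1 := I1 n hn
      have i2 := I2 n hn
      constructor
      · refine bdb_sqeq (sc' n) hy ?_
        linear_combination i1 - (bb n) * hbb0 - (a n + (Z n).1 * Cp n) * haP -
          (dd n + (Z n).1 * Sp n) * hdP - (Z n).1 * (Z n).1 * hCS - hxy
      · refine bdb_sqeq (sg' n) hx ?_
        linear_combination i2 - (ff n) * hff0 - (e n - (Z n).2 * Cp n) * heP -
          (hw n - (Z n).2 * Sp n) * hhP - (Z n).2 * (Z n).2 * hCS - hxy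
  have main : ∀ n, n < q →
      (0 ≤ (Z n).1 ∧ 0 ≤ (Z n).2 ∧ (Z n).1 * (Z n).1 + (Z n).2 * (Z n).2 = 1) ∧
      (a n = (Z n).1 * Cp n ∧ e n = -((Z n).2 * Cp n) ∧
       dd n = (Z n).1 * Sp n ∧ hw n = -((Z n).2 * Sp n)) ∧
      (if n + 1 < q then
         0 ≤ S n ∧ 0 ≤ C n ∧ S n * S n + C n * C n = 1 ∧
         bb n = -(S n * (Z n).2) ∧ ff n = -(S n * (Z n).1) ∧
         c n = C n * (Z n).2 ∧ g n = C n * (Z n).1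
       else c n = (Z n).2 ∧ g n = (Z n).1) := by
    intro n
    induction n with
    | zero =>
      intro hn
      have hx : 0 ≤ (Z 0).1 := by rw [hZ0]; exact sa' 0
      have hy : 0 ≤ (Z 0).2 := by rw [hZ0]; simp only [neg_nonneg]; exact se' 0
      have hxy : (Z 0).1 * (Z 0).1 + (Z 0).2 * (Z 0).2 = 1 := by
        rw [hZ0]; dsimp only; linear_combination I40
      have hCp0 : Cp 0 = 1 := by simp [hCp]
      have hSp0 : Sp 0 = 0 := by simp [hSp]
      have haP : a 0 = (Z 0).1 * Cp 0 := by rw [hZ0, hCp0]; ring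
      have heP : e 0 = -((Z 0).2 * Cp 0) := by rw [hZ0, hCp0]; dsimp only; ring
      have hdP : dd 0 = (Z 0).1 * Sp 0 := by rw [hSp0, dd0]; ring
      have hhP : hw 0 = -((Z 0).2 * Sp 0) := by rw [hSp0, hw0]; ring
      exact ⟨⟨hx, hy, hxy⟩, ⟨haP, heP, hdP, hhP⟩,
        phiAt 0 hn hx hy hxy haP heP hdP hhP (by rw [hCp0, hSp0]; ring)⟩
    | succ m ih =>
      intro hn
      obtain ⟨⟨hx, hy, hxy⟩, _, hphi⟩ := ih (by omega)
      rw [if_pos hn] at hphi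
      obtain ⟨hS0, hC0, hSC, hbP, hfP, hcP, hgP⟩ := hphi
      have step := bdb_step (Z m).1 (Z m).2 (S m) (C m) (a (m+1)) (e (m+1))
        (dd (m+1)) (hw (m+1)) (Z (m+1)).1 (Z (m+1)).2 (bb m) (ff m) (c m) (g m)
        hx hy hxy hS0 hC0 hSC hbP hfP hcP hgP
        (sa' (m+1)) (sdd' m) (se' (m+1)) (shh' m)
        (I10 m hn) (I11 m hn) (I12 m hn) (I13 m hn)
        (I4 m hn) (I5 m (by omega)) (I14 m hn)
        (by rw [hZs m]) (by rw [hZs m])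
      obtain ⟨sx, sy, sxy, sa1, se1, sd1, sh1⟩ := step
      have ha1 : a (m+1) = (Z (m+1)).1 * Cp (m+1) := by rw [hCp1]; exact sa1
      have he1 : e (m+1) = -((Z (m+1)).2 * Cp (m+1)) := by rw [hCp1]; exact se1
      have hd1 : dd (m+1) = (Z (m+1)).1 * Sp (m+1) := by rw [hSp1]; exact sd1
      have hh1 : hw (m+1) = -((Z (m+1)).2 * Sp (m+1)) := by rw [hSp1]; exact sh1
      exact ⟨⟨sx, sy, sxy⟩, ⟨ha1, he1, hd1, hh1⟩,
        phiAt (m+1) hn sx sy sxy ha1 he1 hd1 hh1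
          (by rw [hCp1, hSp1]; linarith [hSC])⟩
  -- trig facts
  have Xle : ∀ n, n < q → (Z n).2 ≤ 1 := by
    intro n hn
    obtain ⟨⟨hx, hy, hxy⟩, _, _⟩ := main n hn
    nlinarith
  have hsinθ : ∀ n, n < q → Real.sin (Real.arcsin ((Z n).2)) = (Z n).2 := by
    intro n hn
    obtain ⟨⟨hx, hy, hxy⟩, _, _⟩ := main n hn
    exact Real.sin_arcsin (by linarith) (Xle n hn)
  have hcosθ : ∀ n, n < q → Real.cos (Real.arcsin ((Z n).2)) = (Z n).1 := by
    intro n hn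
    obtain ⟨⟨hx, hy, hxy⟩, _, _⟩ := main n hn
    rw [Real.cos_arcsin]
    rw [show 1 - (Z n).2 ^ 2 = (Z n).1 ^ 2 by nlinarith]
    exact Real.sqrt_sq hx
  have mphi : ∀ n, n + 1 < q →
      0 ≤ S n ∧ 0 ≤ C n ∧ S n * S n + C n * C n = 1 ∧
      bb n = -(S n * (Z n).2) ∧ ff n = -(S n * (Z n).1) ∧
      c n = C n * (Z n).2 ∧ g n = C n * (Z n).1 := by
    intro n hn
    have h := (main n (by omega)).2.2
    rwa [if_pos hn] at h
  have hsinφ : ∀ n, n + 1 < q → Real.sin (Real.arcsin (S n)) = S n := by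
    intro n hn
    obtain ⟨h1, h2, h3, _⟩ := mphi n hn
    exact Real.sin_arcsin (by nlinarith) (by nlinarith)
  have hcosφ : ∀ n, n + 1 < q → Real.cos (Real.arcsin (S n)) = C n := by
    intro n hn
    obtain ⟨h1, h2, h3, _⟩ := mphi n hn
    rw [Real.cos_arcsin]
    rw [show 1 - S n ^ 2 = C n ^ 2 by nlinarith]
    exact Real.sqrt_sq h2
  refine ⟨fun i => Real.arcsin ((Z i.1).2), fun i => Real.arcsin (S i.1), ?_, ?_, ?_, ?_, ?_, ?_⟩
  · intro i
    obtain ⟨⟨hx, hy, hxy⟩, _, _⟩ := main i.1 i.isLt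
    exact ⟨Real.arcsin_nonneg.2 hy, Real.arcsin_le_pi_div_two _⟩
  · intro i
    have hi : i.1 + 1 < q := by have := i.isLt; omega
    obtain ⟨h1, _⟩ := mphi i.1 hi
    exact ⟨Real.arcsin_nonneg.2 h1, Real.arcsin_le_pi_div_two _⟩
  · -- B₁₁
    funext i j
    rw [eB11 i j]
    show A11 i.1 j.1 = bdbB11 q _ _ i j
    rw [bdbB11]
    by_cases hd1 : (j : ℕ) = (i : ℕ)
    · rw [if_pos hd1, hd1, hcosθ i.1 i.isLt]
      obtain ⟨_, ⟨haP, _, _, _⟩, _⟩ := main i.1 i.isLt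
      rw [show A11 i.1 i.1 = a i.1 from rfl, haP]
      by_cases h0 : 0 < (i : ℕ)
      · rw [dif_pos h0, hcosφ (i.1 - 1) (by have := i.isLt; omega)]
        simp only [hCp]
        rw [if_neg (show ¬(i:ℕ) = 0 by omega)]
      · rw [dif_neg h0]
        simp only [hCp]
        rw [if_pos (show (i:ℕ) = 0 by omega)]
    · rw [if_neg hd1]
      by_cases hd2 : (j : ℕ) = (i : ℕ) + 1
      · rw [dif_pos hd2, hsinθ i.1 i.isLt, hsinφ i.1 (by rw [← hd2]; exact j.isLt)]
        obtain ⟨_, _, _, hbP, _, _⟩ := mphi i.1 (by rw [← hd2]; exact j.isLt)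
        rw [show A11 i.1 j.1 = bb i.1 by rw [hbb, hd2], hbP]
        ring
      · rw [dif_neg hd2]
        exact z11 i.1 j.1 (by omega)
  · -- B₁₂
    funext i j
    rw [eB12 i j]
    show A12 i.1 j.1 = bdbB12 q _ _ i j
    rw [bdbB12]
    by_cases hd1 : (j : ℕ) = (i : ℕ)
    · rw [if_pos hd1, hd1, hsinθ i.1 i.isLt]
      by_cases h0 : (i : ℕ) < q - 1
      · rw [dif_pos h0, hcosφ i.1 (by omega)]
        obtain ⟨_, _, _, _, _, hcP, _⟩ := mphi i.1 (by omega)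
        rw [show A12 i.1 i.1 = c i.1 from rfl, hcP]
        ring
      · rw [dif_neg h0, mul_one]
        have h := (main i.1 i.isLt).2.2
        rw [if_neg (by have := i.isLt; omega)] at h
        exact h.1
    · rw [if_neg hd1]
      by_cases hd2 : (i : ℕ) = (j : ℕ) + 1
      · rw [dif_pos hd2, hcosθ i.1 i.isLt, hsinφ j.1 (by rw [← hd2]; exact i.isLt)]
        obtain ⟨_, ⟨_, _, hdP, _⟩, _⟩ := main i.1 i.isLt
        have e1 : A12 i.1 j.1 = dd i.1 := by
          simp only [hdd]
          rw [if_neg (show ¬(i:ℕ) = 0 by omega), show (i:ℕ) - 1 = (j:ℕ) from by omega]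
        rw [e1, hdP]
        simp only [hSp]
        rw [if_neg (show ¬(i:ℕ) = 0 by omega), show (i:ℕ) - 1 = (j:ℕ) from by omega]
      · rw [dif_neg hd2]
        exact z12 i.1 j.1 (by omega)
  · -- B₂₁
    funext i j
    rw [eB21 i j]
    show A21 i.1 j.1 = bdbB21 q _ _ i j
    rw [bdbB21]
    by_cases hd1 : (j : ℕ) = (i : ℕ)
    · rw [if_pos hd1, hd1, hsinθ i.1 i.isLt]
      obtain ⟨_, ⟨_, heP, _, _⟩, _⟩ := main i.1 i.isLt
      rw [show A21 i.1 i.1 = e i.1 from rfl, heP]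
      by_cases h0 : 0 < (i : ℕ)
      · rw [dif_pos h0, hcosφ (i.1 - 1) (by have := i.isLt; omega)]
        simp only [hCp]
        rw [if_neg (show ¬(i:ℕ) = 0 by omega)]
      · rw [dif_neg h0]
        simp only [hCp]
        rw [if_pos (show (i:ℕ) = 0 by omega)]
    · rw [if_neg hd1]
      by_cases hd2 : (j : ℕ) = (i : ℕ) + 1
      · rw [dif_pos hd2, hcosθ i.1 i.isLt, hsinφ i.1 (by rw [← hd2]; exact j.isLt)]
        obtain ⟨_, _, _, _, hfP, _, _⟩ := mphi i.1 (by rw [← hd2]; exact j.isLt)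
        rw [show A21 i.1 j.1 = ff i.1 by rw [hff, hd2], hfP]
        ring
      · rw [dif_neg hd2]
        exact z21 i.1 j.1 (by omega)
  · -- B₂₂
    funext i j
    rw [eB22 i j]
    show A22 i.1 j.1 = bdbB22 q _ _ i j
    rw [bdbB22]
    by_cases hd1 : (j : ℕ) = (i : ℕ)
    · rw [if_pos hd1, hd1, hcosθ i.1 i.isLt]
      by_cases h0 : (i : ℕ) < q - 1
      · rw [dif_pos h0, hcosφ i.1 (by omega)]
        obtain ⟨_, _, _, _, _, _, hgP⟩ := mphi i.1 (by omega)
        rw [show A22 i.1 i.1 = g i.1 from rfl, hgP]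
        ring
      · rw [dif_neg h0, mul_one]
        have h := (main i.1 i.isLt).2.2
        rw [if_neg (by have := i.isLt; omega)] at h
        exact h.2
    · rw [if_neg hd1]
      by_cases hd2 : (i : ℕ) = (j : ℕ) + 1
      · rw [dif_pos hd2, hsinθ i.1 i.isLt, hsinφ j.1 (by rw [← hd2]; exact i.isLt)]
        obtain ⟨_, ⟨_, _, _, hhP⟩, _⟩ := main i.1 i.isLt
        have e1 : A22 i.1 j.1 = hw i.1 := by
          simp only [hhw]
          rw [if_neg (show ¬(i:ℕ) = 0 by omega), show (i:ℕ) - 1 = (j:ℕ) from by omega]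
        rw [e1, hhP]
        simp only [hSp]
        rw [if_neg (show ¬(i:ℕ) = 0 by omega), show (i:ℕ) - 1 = (j:ℕ) from by omega]
      · rw [dif_neg hd2]
        exact z22 i.1 j.1 (by omega)
end

section
/- Let A be an m-by-m real symmetric tridiagonal matrix and let λ ∈ ℝ be an eigenvalue of A. Then there exist an m-by-m real orthogonal matrix Q and an m-by-m upper triangular matrix R whose last row is entirely zero such that A − λI = QR. -/
open Matrix

set_option maxHeartbeats 1000000 in
/-- If `λ` is an eigenvalue of a real symmetric tridiagonal matrix `A`, then
`A − λI` admits a QR factorization whose upper triangular factor has an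
all-zero last row. -/
theorem eigenvalue_qr_zero_last_row (m : ℕ) (A : Matrix (Fin m) (Fin m) ℝ) (lam : ℝ)
    (hsymm : A.IsSymm)
    (htri : ∀ i j : Fin m, i.val + 1 < j.val ∨ j.val + 1 < i.val → A i j = 0)
    (heig : ∃ v : Fin m → ℝ, v ≠ 0 ∧ A.mulVec v = lam • v) :
    ∃ Q R : Matrix (Fin m) (Fin m) ℝ,
      Q ∈ Matrix.orthogonalGroup (Fin m) ℝ ∧
      (∀ i j : Fin m, j.val < i.val → R i j = 0) ∧
      (∀ i j : Fin m, i.val = m - 1 → R i j = 0) ∧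
      A - lam • (1 : Matrix (Fin m) (Fin m) ℝ) = Q * R := by
  obtain ⟨v, hv, hAv⟩ := heig
  rcases Nat.eq_zero_or_pos m with hm | hm
  · subst hm
    exact absurd (funext fun i => i.elim0) hv
  obtain ⟨n, rfl⟩ := Nat.exists_eq_succ_of_ne_zero hm.ne'
  set B : Matrix (Fin (n+1)) (Fin (n+1)) ℝ := A - lam • 1 with hBdef
  have hBsymm : Bᵀ = B := by
    rw [hBdef, Matrix.transpose_sub, Matrix.transpose_smul, Matrix.transpose_one, hsymm]
  have hBv : B.mulVec v = 0 := by
    rw [hBdef, Matrix.sub_mulVec, hAv, Matrix.smul_mulVec, Matrix.one_mulVec, sub_self]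
  have hvB : Matrix.vecMul v B = 0 := by
    rw [← hBsymm, Matrix.vecMul_transpose, hBv]
  -- Work in Euclidean space
  have hinner : ∀ x y : EuclideanSpace ℝ (Fin (n+1)), (inner ℝ x y : ℝ) = ∑ i, x i * y i := by
    intro x y
    rw [PiLp.inner_apply]
    simp [RCLike.inner_apply, conj_trivial, mul_comm]
  set vE : EuclideanSpace ℝ (Fin (n+1)) := (WithLp.equiv 2 _).symm v with hvE
  have hvEapp : ∀ i, vE i = v i := fun i => rfl
  have hvE0 : vE ≠ 0 := by
    intro h
    exact hv (by simpa [hvE] using congrArg (WithLp.equiv 2 _) h)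
  set u : EuclideanSpace ℝ (Fin (n+1)) := ‖vE‖⁻¹ • vE with hu
  have hu1 : ‖u‖ = 1 := norm_smul_inv_norm hvE0
  have huapp : ∀ i, u i = ‖vE‖⁻¹ * v i := fun i => rfl
  -- columns of B
  set bcol : Fin (n+1) → EuclideanSpace ℝ (Fin (n+1)) :=
    fun j => (WithLp.equiv 2 _).symm (fun i => B i j) with hbcol
  have hbcolapp : ∀ j i, bcol j i = B i j := fun j i => rfl
  have hub : ∀ j, (inner ℝ u (bcol j) : ℝ) = 0 := by
    intro j
    rw [hinner]
    have h2 : ∑ i, u i * bcol j i = ‖vE‖⁻¹ * ∑ i, v i * B i j := by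
      rw [Finset.mul_sum]
      exact Finset.sum_congr rfl fun i _ => by rw [huapp i, hbcolapp]; ring
    have h3 : ∑ i, v i * B i j = Matrix.vecMul v B j := rfl
    rw [h2, h3, hvB]
    simp
  have hdim : Module.finrank ℝ (EuclideanSpace ℝ (Fin (n+1))) = Fintype.card (Fin (n+1)) :=
    finrank_euclideanSpace
  -- the list to which we apply Gram-Schmidt: u first, then the first n columns
  set f : Fin (n+1) → EuclideanSpace ℝ (Fin (n+1)) :=
    Fin.cases u (fun j => bcol j.castSucc) with hf
  haveI hwf : WellFoundedLT (Fin (n+1)) := inferInstance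
  set gsB : OrthonormalBasis (Fin (n+1)) ℝ (EuclideanSpace ℝ (Fin (n+1))) :=
    @InnerProductSpace.gramSchmidtOrthonormalBasis ℝ (EuclideanSpace ℝ (Fin (n+1))) _ _ _ (Fin (n+1)) _ _ hwf _ _
      hdim f with hgsB
  have hgs0 : gsB 0 = u := by
    have h0 : InnerProductSpace.gramSchmidt ℝ f 0 = u := by
      have h := InnerProductSpace.gramSchmidt_bot (𝕜 := ℝ) (f := f)
      have hbot : (⊥ : Fin (n+1)) = 0 := rfl
      rw [hbot] at h
      rw [h]
      simp [hf]
    have hgsn : InnerProductSpace.gramSchmidtNormed ℝ f 0 = u := by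
      rw [InnerProductSpace.gramSchmidtNormed, h0, hu1]
      simp
    have hne : InnerProductSpace.gramSchmidtNormed ℝ f 0 ≠ 0 := by
      rw [hgsn]
      intro h
      rw [h] at hu1
      simp at hu1
    rw [hgsB, InnerProductSpace.gramSchmidtOrthonormalBasis_apply hdim hne, hgsn]
  -- q i = gsB (i + 1), cyclic shift
  set q : Fin (n+1) → EuclideanSpace ℝ (Fin (n+1)) := fun i => gsB (i + 1) with hq
  set Q : Matrix (Fin (n+1)) (Fin (n+1)) ℝ := fun i k => q k i with hQ
  have hQapp : ∀ i k, Q i k = q k i := fun i k => rfl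
  have hqorth : ∀ k l, (inner ℝ (q k) (q l) : ℝ) = if k = l then 1 else 0 := by
    intro k l
    have h := (orthonormal_iff_ite.mp gsB.orthonormal) (k + 1) (l + 1)
    rw [hq]
    simp only
    rw [h]
    congr 1
    simp only [eq_iff_iff]
    constructor
    · intro hkl; exact add_right_cancel hkl
    · intro hkl; rw [hkl]
  have hQmem : Q ∈ Matrix.orthogonalGroup (Fin (n+1)) ℝ := by
    rw [Matrix.mem_orthogonalGroup_iff']
    ext k l
    have hentry : (star Q * Q) k l = ∑ i, q k i * q l i := by
      rw [Matrix.mul_apply]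
      refine Finset.sum_congr rfl fun i _ => ?_
      rw [Matrix.star_apply, hQapp, hQapp, star_trivial]
    rw [← show star Q = Qᵀ from rfl, hentry, ← hinner, hqorth]
    rw [Matrix.one_apply]
  have hQQt : Q * Qᵀ = 1 := by
    have h := hQmem
    rw [Matrix.mem_orthogonalGroup_iff'] at h
    have hst : star Q = Qᵀ := rfl
    rwa [mul_eq_one_comm] at h
  have hRij : ∀ i j, (Qᵀ * B) i j = (inner ℝ (q i) (bcol j) : ℝ) := by
    intro i j
    rw [hinner, Matrix.mul_apply]
    exact Finset.sum_congr rfl fun k _ => by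
      rw [Matrix.transpose_apply, hQapp, hbcolapp]
  have hlastrow : ∀ i j : Fin (n+1), i.val = n → (Qᵀ * B) i j = 0 := by
    intro i j hi
    have hi1 : i + 1 = 0 := by
      ext
      simp [Fin.val_add, hi, Nat.mod_self]
    rw [hRij]
    have hqi : q i = u := by rw [hq]; simp only; rw [hi1, hgs0]
    rw [hqi]
    exact hub j
  refine ⟨Q, Qᵀ * B, hQmem, ?_, ?_, ?_⟩
  · -- upper triangular
    intro i j hij
    by_cases hi : i.val = n
    · exact hlastrow i j hi
    · have hilt : i.val < n := lt_of_le_of_ne (Nat.lt_succ_iff.mp i.isLt) hi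
      have hjlt : j.val < n := lt_trans hij hilt
      have hfj : f (Fin.succ ⟨j.val, hjlt⟩) = bcol j := by
        rw [hf]
        simp only [Fin.cases_succ]
        congr 1
      have hival : (i + 1).val = i.val + 1 := by
        simp [Fin.val_add, Nat.mod_eq_of_lt (Nat.succ_lt_succ hilt)]
      have hlt : Fin.succ ⟨j.val, hjlt⟩ < i + 1 := by
        rw [Fin.lt_def, hival]
        simpa using Nat.succ_lt_succ hij
      have h := InnerProductSpace.gramSchmidtOrthonormalBasis_inv_triangular hdim f hlt
      rw [hfj] at h
      rw [hRij]
      exact h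
  · -- last row zero
    intro i j hi
    exact hlastrow i j (by simpa using hi)
  · rw [← Matrix.mul_assoc, hQQt, Matrix.one_mul, hBdef]
end

section
/- For m ≥ 2 and j ∈ {1, …, m−1}, let G_j(ψ) denote the m-by-m Givens rotation that agrees with the identity matrix except in rows and columns j and j+1, where its 2-by-2 principal submatrix is [[cos ψ, −sin ψ], [sin ψ, cos ψ]]. Then the map from [0, π)^{m−1} to m-by-m real matrices given by (ψ₁, …, ψ_{m−1}) ↦ G₁(ψ₁) · G₂(ψ₂) ⋯ G_{m−1}(ψ_{m−1}) is injective; that is, the expression of a matrix as such a product of Givens rotations with angles in [0, π) is unique. -/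
open Matrix

/-- The `m × m` Givens rotation acting in the plane of coordinates `j` and `j+1`
(0-based) with angle `ψ`: it agrees with the identity except that its entries in
rows and columns `j, j+1` form the 2×2 rotation `[[cos ψ, −sin ψ], [sin ψ, cos ψ]]`. -/
noncomputable def givensRot (m : ℕ) (j : Fin (m - 1)) (ψ : ℝ) :
    Matrix (Fin m) (Fin m) ℝ :=
  fun a b =>
    if a.val = j.val ∧ b.val = j.val then Real.cos ψ
    else if a.val = j.val ∧ b.val = j.val + 1 then -Real.sin ψ
    else if a.val = j.val + 1 ∧ b.val = j.val then Real.sin ψ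
    else if a.val = j.val + 1 ∧ b.val = j.val + 1 then Real.cos ψ
    else if a = b then 1 else 0

section Aux

variable {m : ℕ}

lemma givensRot_eq_rep (j : Fin (m-1)) (ψ : ℝ) (hj1 : j.val < m) (hj2 : j.val + 1 < m) :
    givensRot m j ψ = 1
      + (Real.cos ψ - 1) • (single (⟨j.val, hj1⟩ : Fin m) ⟨j.val, hj1⟩ (1:ℝ)
          + single (⟨j.val+1, hj2⟩ : Fin m) ⟨j.val+1, hj2⟩ 1)
      + Real.sin ψ • (single (⟨j.val+1, hj2⟩ : Fin m) ⟨j.val, hj1⟩ 1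
          - single (⟨j.val, hj1⟩ : Fin m) ⟨j.val+1, hj2⟩ 1) := by
  ext a b
  simp only [givensRot, Matrix.add_apply, Matrix.one_apply, Matrix.smul_apply,
    Matrix.sub_apply, Matrix.single, Matrix.of_apply, smul_eq_mul, Fin.ext_iff]
  split_ifs
  all_goals try omega
  all_goals try ring

end Aux

section Aux2

variable {m : ℕ}

lemma givensRot_mul (j : Fin (m-1)) (ψ φ : ℝ) :
    givensRot m j ψ * givensRot m j φ = givensRot m j (ψ + φ) := by
  have hj1 : j.val < m := by have := j.isLt; omega
  have hj2 : j.val + 1 < m := by have := j.isLt; omega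
  set A : Matrix (Fin m) (Fin m) ℝ :=
    single (⟨j.val, hj1⟩ : Fin m) ⟨j.val, hj1⟩ (1:ℝ)
      + single (⟨j.val+1, hj2⟩ : Fin m) ⟨j.val+1, hj2⟩ 1 with hA
  set B : Matrix (Fin m) (Fin m) ℝ :=
    single (⟨j.val+1, hj2⟩ : Fin m) ⟨j.val, hj1⟩ 1
      - single (⟨j.val, hj1⟩ : Fin m) ⟨j.val+1, hj2⟩ 1 with hB
  have hne : (⟨j.val, hj1⟩ : Fin m) ≠ ⟨j.val+1, hj2⟩ := by
    simp [Fin.ext_iff]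
  have hne' : (⟨j.val+1, hj2⟩ : Fin m) ≠ ⟨j.val, hj1⟩ := by
    simp [Fin.ext_iff]
  have hAA : A * A = A := by
    simp [hA, add_mul, mul_add, Matrix.single_mul_single_same,
      Matrix.single_mul_single_of_ne (h := hne), Matrix.single_mul_single_of_ne (h := hne')]
    try abel
  have hAB : A * B = B := by
    simp [hA, hB, add_mul, mul_sub, Matrix.single_mul_single_same,
      Matrix.single_mul_single_of_ne (h := hne), Matrix.single_mul_single_of_ne (h := hne')]
    try abel
  have hBA : B * A = B := by
    simp [hA, hB, sub_mul, mul_add, Matrix.single_mul_single_same,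
      Matrix.single_mul_single_of_ne (h := hne), Matrix.single_mul_single_of_ne (h := hne')]
    try abel
  have hBB : B * B = -A := by
    simp [hA, hB, sub_mul, mul_sub, Matrix.single_mul_single_same,
      Matrix.single_mul_single_of_ne (h := hne), Matrix.single_mul_single_of_ne (h := hne')]
    abel
  have mulform : ∀ c s c' s' : ℝ,
      (1 + c • A + s • B) * (1 + c' • A + s' • B)
        = 1 + (c + c' + c*c' - s*s') • A + (s + s' + c*s' + s*c') • B := by
    intro c s c' s'
    simp only [add_mul, mul_add, mul_one, one_mul, smul_mul_assoc, mul_smul_comm,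
      hAA, hAB, hBA, hBB, smul_smul, smul_neg]
    module
  rw [givensRot_eq_rep j ψ hj1 hj2, givensRot_eq_rep j φ hj1 hj2,
    givensRot_eq_rep j (ψ+φ) hj1 hj2, ← hA, ← hB, mulform]
  have e1 : (Real.cos ψ - 1) + (Real.cos φ - 1) + (Real.cos ψ - 1)*(Real.cos φ - 1)
      - Real.sin ψ * Real.sin φ = Real.cos (ψ+φ) - 1 := by
    rw [Real.cos_add]; ring
  have e2 : Real.sin ψ + Real.sin φ + (Real.cos ψ - 1)*Real.sin φ
      + Real.sin ψ*(Real.cos φ - 1) = Real.sin (ψ+φ) := by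
    rw [Real.sin_add]; ring
  rw [e1, e2]

lemma givensRot_zero (j : Fin (m-1)) : givensRot m j 0 = 1 := by
  have hj1 : j.val < m := by have := j.isLt; omega
  have hj2 : j.val + 1 < m := by have := j.isLt; omega
  rw [givensRot_eq_rep j 0 hj1 hj2]
  simp

lemma givensRot_col (ψ : Fin (m-1) → ℝ) (L : List (Fin (m-1))) (k : ℕ) (hk : k < m)
    (hL : ∀ i ∈ L, k < i.val) :
    ∀ a : Fin m,
    ((L.map fun j => givensRot m j (ψ j)).prod) a ⟨k, hk⟩ = if a.val = k then 1 else 0 := by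
  induction L with
  | nil => intro a; simp [Matrix.one_apply, Fin.ext_iff]
  | cons j L ih =>
    intro a
    have hL' : ∀ i ∈ L, k < i.val := fun i hi => hL i (by simp [hi])
    have hj : k < j.val := hL j (by simp)
    simp only [List.map_cons, List.prod_cons, Matrix.mul_apply]
    rw [Finset.sum_eq_single (⟨k, hk⟩ : Fin m)]
    · rw [ih hL']
      simp only [if_pos rfl, mul_one]
      simp only [givensRot]
      split_ifs <;> first | rfl | omega | (simp_all [Fin.ext_iff]; try omega)
    · intro c _ hc
      rw [ih hL']
      have : ¬ (c.val = k) := fun h => hc (by simpa [Fin.ext_iff] using h)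
      simp [this]
    · intro hmem
      exact absurd (Finset.mem_univ _) hmem

end Aux2

section Aux3

variable {m : ℕ}

lemma givensRot_diag (ψ0 : ℝ) (ψ : Fin (m-1) → ℝ) (j : Fin (m-1)) (hj1 : j.val < m)
    (L : List (Fin (m-1))) (hL : ∀ i ∈ L, j.val < i.val) :
    (givensRot m j ψ0 * (L.map fun i => givensRot m i (ψ i)).prod) ⟨j.val, hj1⟩ ⟨j.val, hj1⟩
      = Real.cos ψ0 := by
  rw [Matrix.mul_apply]
  rw [Finset.sum_eq_single (⟨j.val, hj1⟩ : Fin m)]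
  · rw [givensRot_col ψ L j.val hj1 hL]
    simp [givensRot]
  · intro c _ hc
    rw [givensRot_col ψ L j.val hj1 hL]
    have : ¬ (c.val = j.val) := fun h => hc (by simpa [Fin.ext_iff] using h)
    simp [this]
  · intro hmem
    exact absurd (Finset.mem_univ _) hmem

lemma givens_key (ψ ψ' : Fin (m-1) → ℝ)
    (hψ : ∀ j, ψ j ∈ Set.Ico 0 Real.pi) (hψ' : ∀ j, ψ' j ∈ Set.Ico 0 Real.pi) :
    ∀ L : List (Fin (m-1)), L.Pairwise (fun a b => a.val < b.val) →
      ((L.map fun i => givensRot m i (ψ i)).prod = (L.map fun i => givensRot m i (ψ' i)).prod) →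
      ∀ i ∈ L, ψ i = ψ' i := by
  intro L
  induction L with
  | nil => intro _ _ i hi; exact absurd hi List.not_mem_nil
  | cons j L ih =>
    intro hpair h i hi
    rw [List.pairwise_cons] at hpair
    obtain ⟨hj, hpair'⟩ := hpair
    have hj1 : j.val < m := by have := j.isLt; omega
    simp only [List.map_cons, List.prod_cons] at h
    have hcos : Real.cos (ψ j) = Real.cos (ψ' j) := by
      rw [← givensRot_diag (ψ j) ψ j hj1 L hj, ← givensRot_diag (ψ' j) ψ' j hj1 L hj, h]
    have hjj : ψ j = ψ' j := by
      refine Real.injOn_cos ⟨(hψ j).1, le_of_lt (hψ j).2⟩ ⟨(hψ' j).1, le_of_lt (hψ' j).2⟩ hcos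
    rcases List.mem_cons.mp hi with rfl | hi
    · exact hjj
    · -- cancel the head
      rw [← hjj] at h
      have hc : givensRot m j (-(ψ j)) * givensRot m j (ψ j) = 1 := by
        rw [givensRot_mul, neg_add_cancel, givensRot_zero]
      have h' : (L.map fun i => givensRot m i (ψ i)).prod
          = (L.map fun i => givensRot m i (ψ' i)).prod := by
        have := congrArg (fun M => givensRot m j (-(ψ j)) * M) h
        simpa [← mul_assoc, hc] using this
      exact ih hpair' h' i hi

end Aux3


/-- The expression of a matrix as an ordered product
`G₁(ψ₁) · G₂(ψ₂) ⋯ G_{m−1}(ψ_{m−1})` of Givens rotations, where `G_j` rotates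
coordinates `j` and `j+1` through an angle `ψ_j ∈ [0, π)`, is unique. -/
theorem givens_product_injective (m : ℕ) (hm : 2 ≤ m)
    (ψ ψ' : Fin (m - 1) → ℝ)
    (hψ : ∀ j, ψ j ∈ Set.Ico 0 Real.pi)
    (hψ' : ∀ j, ψ' j ∈ Set.Ico 0 Real.pi)
    (h : ((List.finRange (m - 1)).map fun j => givensRot m j (ψ j)).prod =
        ((List.finRange (m - 1)).map fun j => givensRot m j (ψ' j)).prod) :
    ψ = ψ' := by
  funext j
  refine givens_key ψ ψ' hψ hψ' (List.finRange (m-1)) ?_ h j (List.mem_finRange j)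
  exact (List.pairwise_lt_finRange (m-1)).imp (fun h => h)
end

section
/- Let B be an m-by-m real matrix, σ ∈ ℝ, and let S and T be m-by-m real orthogonal matrices and L, R be m-by-m real matrices such that BBᵀ − σ²I = S·Lᵀ and BᵀB − σ²I = T·R. Define B̄ = Sᵀ B T. Then B̄B̄ᵀ = LᵀS + σ²I and B̄ᵀB̄ = RT + σ²I; that is, the SVD step on B implicitly performs QR steps with shift σ² on both BBᵀ and BᵀB. -/
open Matrix

/-- An SVD step on `B` implicitly computes QR steps for `BBᵀ` and `BᵀB`: if
`BBᵀ − σ²I = S·Lᵀ` and `BᵀB − σ²I = T·R` with `S`, `T` orthogonal, then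
`B̄ = SᵀBT` satisfies `B̄B̄ᵀ = LᵀS + σ²I` and `B̄ᵀB̄ = RT + σ²I`. -/
theorem svd_step_implicit_qr (m : ℕ) (B L R S T : Matrix (Fin m) (Fin m) ℝ) (σ : ℝ)
    (hS : S ∈ Matrix.orthogonalGroup (Fin m) ℝ)
    (hT : T ∈ Matrix.orthogonalGroup (Fin m) ℝ)
    (hleft : B * Bᵀ - σ ^ 2 • (1 : Matrix (Fin m) (Fin m) ℝ) = S * Lᵀ)
    (hright : Bᵀ * B - σ ^ 2 • (1 : Matrix (Fin m) (Fin m) ℝ) = T * R) :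
    (Sᵀ * B * T) * (Sᵀ * B * T)ᵀ = Lᵀ * S + σ ^ 2 • (1 : Matrix (Fin m) (Fin m) ℝ) ∧
    (Sᵀ * B * T)ᵀ * (Sᵀ * B * T) = R * T + σ ^ 2 • (1 : Matrix (Fin m) (Fin m) ℝ) := by
  have hS1 : Sᵀ * S = 1 := hS.1
  have hS2 : S * Sᵀ = 1 := hS.2
  have hT2 : T * Tᵀ = 1 := hT.2
  have hT1 : Tᵀ * T = 1 := hT.1
  have hBBt : B * Bᵀ = S * Lᵀ + σ ^ 2 • (1 : Matrix (Fin m) (Fin m) ℝ) := by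
    rw [← hleft]; abel
  have hBtB : Bᵀ * B = T * R + σ ^ 2 • (1 : Matrix (Fin m) (Fin m) ℝ) := by
    rw [← hright]; abel
  have hTc : ∀ X : Matrix (Fin m) (Fin m) ℝ, T * (Tᵀ * X) = X := fun X => by
    rw [← Matrix.mul_assoc, hT2, Matrix.one_mul]
  have hSc : ∀ X : Matrix (Fin m) (Fin m) ℝ, Sᵀ * (S * X) = X := fun X => by
    rw [← Matrix.mul_assoc, hS1, Matrix.one_mul]
  constructor
  · simp only [Matrix.transpose_mul, Matrix.transpose_transpose, Matrix.mul_assoc]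
    rw [hTc, ← Matrix.mul_assoc B, hBBt, Matrix.add_mul, Matrix.smul_mul, Matrix.one_mul,
      Matrix.mul_add, Matrix.mul_assoc S, hSc, mul_smul_comm, hS1]
  · have hSc2 : ∀ X : Matrix (Fin m) (Fin m) ℝ, S * (Sᵀ * X) = X := fun X => by
      rw [← Matrix.mul_assoc, hS2, Matrix.one_mul]
    have hTc1 : ∀ X : Matrix (Fin m) (Fin m) ℝ, Tᵀ * (T * X) = X := fun X => by
      rw [← Matrix.mul_assoc, hT1, Matrix.one_mul]
    simp only [Matrix.transpose_mul, Matrix.transpose_transpose, Matrix.mul_assoc]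
    rw [hSc2, ← Matrix.mul_assoc Bᵀ B T, hBtB, Matrix.add_mul, Matrix.smul_mul,
      Matrix.one_mul, Matrix.mul_add, Matrix.mul_assoc T R T, hTc1, mul_smul_comm, hT1]
end
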